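/- arXiv:2203.15797 — 14 statements merged into one kernel-verified Lean document; each statement's English description precedes it below -/
import Mathlib

section
/- Let Θ ⊆ ℝ^p be a convex set, let θ* ∈ Θ, let v ∈ ℝ^p, and let ε > 0. Then the following two conditions are equivalent: (i) the infimum distance from the origin to the set v + N_Θ(θ*) = {v + u : u ∈ N_Θ(θ*)} is at most ε; (ii) ⟨v, θ − θ*⟩ ≥ −ε‖θ − θ*‖ for every θ ∈ Θ (equivalently, −inf over θ ∈ Θ \ {θ*} of ⟨v, (θ − θ*)/‖θ − θ*‖⟩ is at most ε). -/
open scoped InnerProductSpace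

/-- For a convex set `Θ ⊆ ℝ^p`, `θ* ∈ Θ`, `v ∈ ℝ^p` and `ε > 0`, the
infimum distance from the origin to the set `v + N_Θ(θ*)` is at most `ε` iff
`⟨v, θ − θ*⟩ ≥ −ε‖θ − θ*‖` for every `θ ∈ Θ`. -/
theorem stmt0 (p : ℕ) (Θ : Set (EuclideanSpace ℝ (Fin p))) (hΘ : Convex ℝ Θ)
    (θs : EuclideanSpace ℝ (Fin p)) (hθs : θs ∈ Θ)
    (v : EuclideanSpace ℝ (Fin p)) (ε : ℝ) (hε : 0 < ε) :
    Metric.infDist 0 {x | ∃ u, (∀ θ ∈ Θ, ⟪u, θ - θs⟫_ℝ ≤ 0) ∧ x = v + u} ≤ ε ↔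
      ∀ θ ∈ Θ, -ε * ‖θ - θs‖ ≤ ⟪v, θ - θs⟫_ℝ := by
  set S : Set (EuclideanSpace ℝ (Fin p)) :=
    {x | ∃ u, (∀ θ ∈ Θ, ⟪u, θ - θs⟫_ℝ ≤ 0) ∧ x = v + u} with hS
  have hSne : S.Nonempty := ⟨v, 0, fun θ hθ => by simp, by simp⟩
  constructor
  · -- forward direction
    intro h θ hθ
    by_cases hn : θ = θs
    · subst hn
      rw [sub_self, inner_zero_right, norm_zero, mul_zero]
    have hnpos : 0 < ‖θ - θs‖ := by
      rw [norm_pos_iff]; exact sub_ne_zero.mpr hn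
    have key : ∀ δ > 0, -(ε + δ) * ‖θ - θs‖ ≤ ⟪v, θ - θs⟫_ℝ := by
      intro δ hδ
      have hlt : Metric.infDist 0 S < ε + δ := lt_of_le_of_lt h (by linarith)
      rw [Metric.infDist_lt_iff hSne] at hlt
      obtain ⟨x, hxS, hxd⟩ := hlt
      obtain ⟨u, hu, rfl⟩ := hxS
      have hxlt : ‖v + u‖ < ε + δ := by
        rwa [dist_comm, dist_zero_right] at hxd
      have h1 : ⟪v, θ - θs⟫_ℝ = ⟪v + u, θ - θs⟫_ℝ - ⟪u, θ - θs⟫_ℝ := by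
        rw [inner_add_left]; ring
      have h2 : -(‖v + u‖ * ‖θ - θs‖) ≤ ⟪v + u, θ - θs⟫_ℝ := by
        have := abs_real_inner_le_norm (v + u) (θ - θs)
        have := neg_abs_le ⟪v + u, θ - θs⟫_ℝ
        linarith
      have h3 := hu θ hθ
      nlinarith [norm_nonneg (θ - θs)]
    by_contra hc
    push_neg at hc
    set a := ⟪v, θ - θs⟫_ℝ with ha
    set n := ‖θ - θs‖ with hn'
    have hδ : 0 < (-ε * n - a) / (2 * n) := div_pos (by linarith) (by linarith)
    have hkey := key _ hδ
    have he : -(ε + (-ε * n - a) / (2 * n)) * n = -ε * n - (-ε * n - a) / 2 := by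
      field_simp
      ring
    rw [he] at hkey
    linarith
  · -- backward direction
    intro h
    set D : Set (EuclideanSpace ℝ (Fin p)) :=
      {w | ∃ c : ℝ, 0 ≤ c ∧ ∃ θ ∈ Θ, w = c • (θ - θs)} with hD
    set K : Set (EuclideanSpace ℝ (Fin p)) := closure D with hK
    have hDconv : Convex ℝ D := by
      rintro w1 ⟨c1, hc1, θ1, hθ1, rfl⟩ w2 ⟨c2, hc2, θ2, hθ2, rfl⟩ s t hs ht hst
      by_cases hz : s * c1 + t * c2 = 0
      · have h1 : s * c1 = 0 := by nlinarith [mul_nonneg hs hc1, mul_nonneg ht hc2]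
        have h2 : t * c2 = 0 := by nlinarith [mul_nonneg hs hc1, mul_nonneg ht hc2]
        refine ⟨0, le_refl 0, θs, hθs, ?_⟩
        rw [smul_smul, smul_smul, h1, h2]
        simp
      · have hrpos : 0 < s * c1 + t * c2 :=
          lt_of_le_of_ne (by positivity) (Ne.symm hz)
        refine ⟨s * c1 + t * c2, le_of_lt hrpos,
          (s * c1 / (s * c1 + t * c2)) • θ1 + (t * c2 / (s * c1 + t * c2)) • θ2, ?_, ?_⟩
        · exact hΘ hθ1 hθ2 (by positivity) (by positivity) (by field_simp)
        · match_scalars <;> field_simp <;> ring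
    have hKconv : Convex ℝ K := hDconv.closure
    have hDzero : (0 : EuclideanSpace ℝ (Fin p)) ∈ D :=
      ⟨0, le_refl 0, θs, hθs, by simp⟩
    have hKne : K.Nonempty := ⟨0, subset_closure hDzero⟩
    have hKcomplete : IsComplete K := isClosed_closure.isComplete
    obtain ⟨z, hzK, hzmin⟩ :=
      exists_norm_eq_iInf_of_complete_convex hKne hKcomplete hKconv (-v)
    have hproj : ∀ w ∈ K, ⟪-v - z, w - z⟫_ℝ ≤ 0 :=
      (norm_eq_iInf_iff_real_inner_le_zero hKconv hzK).mp hzmin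
    -- 2 • z ∈ K
    have h2z : (2 : ℝ) • z ∈ K := by
      have hcont : Continuous fun w : EuclideanSpace ℝ (Fin p) => (2 : ℝ) • w :=
        continuous_const_smul _
      have hmem : (2 : ℝ) • z ∈
          closure ((fun w : EuclideanSpace ℝ (Fin p) => (2:ℝ) • w) '' D) :=
        image_closure_subset_closure_image hcont (Set.mem_image_of_mem _ hzK)
      refine closure_mono ?_ hmem
      rintro _ ⟨w, ⟨c, hc, θ, hθ, rfl⟩, rfl⟩
      exact ⟨2 * c, by linarith, θ, hθ, by
        show (2:ℝ) • c • (θ - θs) = (2 * c) • (θ - θs)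
        rw [smul_smul]⟩
    -- ⟪-v - z, z⟫ = 0
    have hzero : ⟪-v - z, z⟫_ℝ = 0 := by
      have h1 := hproj _ (subset_closure hDzero)
      have h2 := hproj _ h2z
      rw [zero_sub, inner_neg_right] at h1
      have e : (2:ℝ) • z - z = z := by
        rw [show ((2:ℝ) • z - z) = (2 - 1 : ℝ) • z by rw [sub_smul, one_smul]]
        norm_num
      rw [e] at h2
      linarith
    -- u := -v - z ∈ N
    have huN : ∀ θ ∈ Θ, ⟪-v - z, θ - θs⟫_ℝ ≤ 0 := by
      intro θ hθ
      have hmem : θ - θs ∈ K := subset_closure ⟨1, zero_le_one, θ, hθ, (one_smul _ _).symm⟩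
      have := hproj _ hmem
      rw [inner_sub_right, hzero] at this
      linarith
    -- the linear bound extends to K
    have hbound : ∀ w ∈ K, -ε * ‖w‖ ≤ ⟪v, w⟫_ℝ := by
      have hDsub : D ⊆ {w : EuclideanSpace ℝ (Fin p) | 0 ≤ ⟪v, w⟫_ℝ + ε * ‖w‖} := by
        rintro _ ⟨c, hc, θ, hθ, rfl⟩
        have hb := h θ hθ
        simp only [Set.mem_setOf_eq, real_inner_smul_right, norm_smul,
          Real.norm_eq_abs, abs_of_nonneg hc]
        nlinarith [mul_nonneg hc (by linarith : (0:ℝ) ≤ ⟪v, θ - θs⟫_ℝ + ε * ‖θ - θs‖)]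
      have hclosed : IsClosed {w : EuclideanSpace ℝ (Fin p) | 0 ≤ ⟪v, w⟫_ℝ + ε * ‖w‖} := by
        have hcont : Continuous fun w : EuclideanSpace ℝ (Fin p) => ⟪v, w⟫_ℝ + ε * ‖w‖ :=
          (continuous_const.inner continuous_id).add (continuous_const.mul continuous_norm)
        exact isClosed_le continuous_const hcont
      intro w hw
      have hmem := hclosed.closure_subset (closure_mono hDsub hw)
      simp only [Set.mem_setOf_eq] at hmem
      linarith
    -- ‖z‖ ≤ ε
    have hvz : ⟪v, z⟫_ℝ = -‖z‖ ^ 2 := by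
      have hz0 := hzero
      rw [inner_sub_left, inner_neg_left, real_inner_self_eq_norm_sq] at hz0
      linarith
    have hzle : ‖z‖ ≤ ε := by
      have hb := hbound z hzK
      rw [hvz] at hb
      nlinarith [norm_nonneg z, hε.le]
    -- conclude
    have hxS : -z ∈ S := ⟨-v - z, huN, by abel⟩
    calc Metric.infDist 0 S ≤ dist 0 (-z) := Metric.infDist_le_dist_of_mem hxS
    _ = ‖z‖ := by rw [dist_comm, dist_zero_right, norm_neg]
    _ ≤ ε := hzle
end

section
/- Let (a_n)_{n≥0} and (b_n)_{n≥0} be sequences of nonnegative real numbers such that the series ∑_{n=0}^∞ a_n b_n converges, ∑_{n=0}^∞ a_n = ∞ (the partial sums tend to infinity), and there exists a constant C > 0 with |b_{n+1} − b_n| ≤ C·a_n for all n. Then b_n → 0 as n → ∞. -/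
/-- If `(a_n)`, `(b_n)` are nonnegative, `∑ a_n b_n` converges, the partial sums
of `∑ a_n` tend to infinity, and `|b_{n+1} − b_n| ≤ C a_n` for some `C > 0`, then `b_n → 0`. -/
theorem stmt3 (a b : ℕ → ℝ) (ha : ∀ n, 0 ≤ a n) (hb : ∀ n, 0 ≤ b n)
    (hsum : Summable (fun n => a n * b n))
    (hdiv : Filter.Tendsto (fun n => ∑ k ∈ Finset.range n, a k) Filter.atTop Filter.atTop)
    (C : ℝ) (hC : 0 < C) (hinc : ∀ n, |b (n + 1) - b n| ≤ C * a n) :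
    Filter.Tendsto b Filter.atTop (nhds 0) := by
  classical
  set L := ∑' n, a n * b n with hLdef
  have hS : Filter.Tendsto (fun n => ∑ k ∈ Finset.range n, a k * b k)
      Filter.atTop (nhds L) := hsum.hasSum.tendsto_sum_nat
  have hSmono : Monotone (fun n => ∑ k ∈ Finset.range n, a k * b k) := by
    apply monotone_nat_of_le_succ
    intro n
    simp only [Finset.sum_range_succ]
    have : 0 ≤ a n * b n := mul_nonneg (ha n) (hb n)
    linarith
  have hSle : ∀ n, (∑ k ∈ Finset.range n, a k * b k) ≤ L :=
    fun n => hSmono.ge_of_tendsto hS n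
  rw [Metric.tendsto_atTop]
  by_contra hcon
  push_neg at hcon
  obtain ⟨ε, hε, hfreq⟩ := hcon
  set δ := ε / 2 * (ε / (2 * C)) with hδdef
  have hδpos : 0 < δ := by positivity
  -- tails of ∑ a b are small
  obtain ⟨N, hN⟩ := (Metric.tendsto_atTop.mp hS) δ hδpos
  obtain ⟨n, hnN, hbn⟩ := hfreq N
  have hbnε : ε ≤ b n := by
    have : dist (b n) 0 = b n := by
      rw [Real.dist_eq, sub_zero, abs_of_nonneg (hb n)]
    linarith [hbn, this.symm ▸ hbn]
  -- partial sums of a over [n, j)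
  have hA : Filter.Tendsto (fun j => ∑ k ∈ Finset.Ico n j, a k)
      Filter.atTop Filter.atTop := by
    have h1 : Filter.Tendsto
        (fun j => (∑ k ∈ Finset.range j, a k) - ∑ k ∈ Finset.range n, a k)
        Filter.atTop Filter.atTop :=
      Filter.tendsto_atTop_add_const_right _ _ hdiv
    apply h1.congr'
    filter_upwards [Filter.eventually_ge_atTop n] with j hj
    rw [Finset.sum_Ico_eq_sub _ hj]
  have hex : ∃ m, ε / (2 * C) < ∑ k ∈ Finset.Ico n m, a k :=
    (hA.eventually_gt_atTop (ε / (2 * C))).exists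
  set m := Nat.find hex with hmdef
  have hm_spec : ε / (2 * C) < ∑ k ∈ Finset.Ico n m, a k := Nat.find_spec hex
  have hm_min : ∀ j < m, (∑ k ∈ Finset.Ico n j, a k) ≤ ε / (2 * C) := by
    intro j hj
    have := Nat.find_min hex hj
    linarith [not_lt.mp this]
  have hnm : n < m := by
    by_contra hnm
    push_neg at hnm
    have : Finset.Ico n m = ∅ := Finset.Ico_eq_empty (by omega)
    rw [this] at hm_spec
    simp at hm_spec
    have : 0 < ε / (2 * C) := by positivity
    linarith
  -- |b j - b n| ≤ C * ∑_{[n,j)} a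
  have hdiff : ∀ j, n ≤ j → |b j - b n| ≤ C * ∑ k ∈ Finset.Ico n j, a k := by
    intro j hj
    induction j, hj using Nat.le_induction with
    | base => simp
    | succ j hj ih =>
      have h1 : |b (j + 1) - b n| ≤ |b (j + 1) - b j| + |b j - b n| := by
        calc |b (j + 1) - b n| = |(b (j + 1) - b j) + (b j - b n)| := by ring_nf
          _ ≤ _ := abs_add_le _ _
      rw [Finset.sum_Ico_succ_top hj]
      calc |b (j + 1) - b n| ≤ |b (j + 1) - b j| + |b j - b n| := h1
        _ ≤ C * a j + C * ∑ k ∈ Finset.Ico n j, a k := add_le_add (hinc j) ih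
        _ = C * ((∑ k ∈ Finset.Ico n j, a k) + a j) := by ring
  -- b stays ≥ ε/2 on [n, m)
  have hbig : ∀ j, n ≤ j → j < m → ε / 2 ≤ b j := by
    intro j hj hjm
    have h1 := hdiff j hj
    have h2 := hm_min j hjm
    have h3 : |b j - b n| ≤ C * (ε / (2 * C)) := by
      calc |b j - b n| ≤ C * ∑ k ∈ Finset.Ico n j, a k := h1
        _ ≤ C * (ε / (2 * C)) := by nlinarith
    have h4 : C * (ε / (2 * C)) = ε / 2 := by field_simp
    rw [h4] at h3
    have := abs_le.mp h3
    linarith [this.1]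
  -- lower bound on the chunk of ∑ a b
  have hchunk : δ < ∑ k ∈ Finset.Ico n m, a k * b k := by
    calc δ = ε / 2 * (ε / (2 * C)) := hδdef
      _ < ε / 2 * ∑ k ∈ Finset.Ico n m, a k := by
          apply mul_lt_mul_of_pos_left hm_spec (by positivity)
      _ = ∑ k ∈ Finset.Ico n m, a k * (ε / 2) := by
          rw [Finset.mul_sum]; apply Finset.sum_congr rfl; intro k _; ring
      _ ≤ ∑ k ∈ Finset.Ico n m, a k * b k := by
          apply Finset.sum_le_sum
          intro k hk
          rw [Finset.mem_Ico] at hk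
          exact mul_le_mul_of_nonneg_left (hbig k hk.1 hk.2) (ha k)
  -- upper bound via small tail
  have heq : ∑ k ∈ Finset.Ico n m, a k * b k
      = (∑ k ∈ Finset.range m, a k * b k) - ∑ k ∈ Finset.range n, a k * b k :=
    Finset.sum_Ico_eq_sub _ (le_of_lt hnm)
  have hNdist := hN n hnN
  rw [Real.dist_eq] at hNdist
  have htail : (∑ k ∈ Finset.range m, a k * b k) - (∑ k ∈ Finset.range n, a k * b k) < δ := by
    have h5 := hSle m
    have h6 := abs_lt.mp hNdist
    linarith [h6.1]
  rw [heq] at hchunk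
  linarith
end

section
/- Let Θ ⊆ ℝ^p be a nonempty closed convex set, let β ∈ (0,1], let α > 0 and α' > 0, let L ≥ 0, and let θ ∈ Θ, z ∈ ℝ^p, g ∈ ℝ^p with ‖g‖ ≤ L. Define θ⁺ = proj_Θ(θ − α z) and z⁺ = β g + ((1−β)/α')(θ − θ⁺). Then ‖z⁺‖² ≤ β L² + (1−β)(α/α')² ‖z‖². -/
open scoped InnerProductSpace

set_option maxHeartbeats 1000000 in
/-- For a nonempty closed convex `Θ`, `β ∈ (0,1]`, `α, α' > 0`, `‖g‖ ≤ L`,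
`θ ∈ Θ`, `θ⁺ = proj_Θ(θ − α z)` and `z⁺ = β g + ((1−β)/α')(θ − θ⁺)`, one has
`‖z⁺‖² ≤ β L² + (1−β)(α/α')² ‖z‖²`. -/
theorem stmt4 (p : ℕ) (Θ : Set (EuclideanSpace ℝ (Fin p))) (hne : Θ.Nonempty)
    (hcl : IsClosed Θ) (hconv : Convex ℝ Θ)
    (β : ℝ) (hβ : β ∈ Set.Ioc (0 : ℝ) 1) (α α' : ℝ) (hα : 0 < α) (hα' : 0 < α')
    (L : ℝ) (hL : 0 ≤ L) (θ z g : EuclideanSpace ℝ (Fin p)) (hθ : θ ∈ Θ) (hg : ‖g‖ ≤ L)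
    (θp : EuclideanSpace ℝ (Fin p)) (hθp : θp ∈ Θ)
    (hproj : ∀ y ∈ Θ, dist (θ - α • z) θp ≤ dist (θ - α • z) y) :
    ‖β • g + ((1 - β) / α') • (θ - θp)‖ ^ 2 ≤ β * L ^ 2 + (1 - β) * (α / α') ^ 2 * ‖z‖ ^ 2 := by
  obtain ⟨hβ0, hβ1⟩ := hβ
  haveI : Nonempty ↑Θ := hne.to_subtype
  set x := θ - α • z with hx
  -- variational characterization of the projection
  have hinf : ‖x - θp‖ = ⨅ w : Θ, ‖x - w‖ := by
    apply le_antisymm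
    · exact le_ciInf fun w => by
        simpa [dist_eq_norm] using hproj w w.2
    · exact ciInf_le ⟨0, fun r ⟨w, hw⟩ => hw ▸ norm_nonneg _⟩ (⟨θp, hθp⟩ : Θ)
  have hvar : ∀ w ∈ Θ, ⟪x - θp, w - θp⟫_ℝ ≤ 0 :=
    (norm_eq_iInf_iff_real_inner_le_zero hconv hθp).1 hinf
  have hkey : ‖θ - θp‖ ≤ α * ‖z‖ := by
    have h1 := hvar θ hθ
    have h2 : ‖θ - θp‖ ^ 2 ≤ α * ⟪z, θ - θp⟫_ℝ := by
      have : ⟪θ - α • z - θp, θ - θp⟫_ℝ =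
          ⟪θ - θp, θ - θp⟫_ℝ - α * ⟪z, θ - θp⟫_ℝ := by
        rw [show θ - α • z - θp = (θ - θp) - α • z by abel, inner_sub_left,
          real_inner_smul_left]
      rw [hx, this] at h1
      rw [← real_inner_self_eq_norm_sq]
      linarith
    have h3 : α * ⟪z, θ - θp⟫_ℝ ≤ α * (‖z‖ * ‖θ - θp‖) :=
      mul_le_mul_of_nonneg_left (real_inner_le_norm z (θ - θp)) hα.le
    have h4 : ‖θ - θp‖ ^ 2 ≤ α * ‖z‖ * ‖θ - θp‖ := by nlinarith
    nlinarith [norm_nonneg (θ - θp), mul_nonneg hα.le (norm_nonneg z)]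
  -- convexity of the squared norm
  set a := g
  set b := (1 / α') • (θ - θp) with hb
  have hbs : β • g + ((1 - β) / α') • (θ - θp) = β • a + (1 - β) • b := by
    rw [hb, smul_smul]; ring_nf; rfl
  have h0 : ‖b‖ = (1 / α') * ‖θ - θp‖ := by
    rw [hb, norm_smul, Real.norm_eq_abs, abs_of_pos (by positivity : (0:ℝ) < 1 / α')]
  have hbb : ‖b‖ ≤ (α / α') * ‖z‖ := by
    rw [h0]
    calc (1 / α') * ‖θ - θp‖ ≤ (1 / α') * (α * ‖z‖) := by
          exact mul_le_mul_of_nonneg_left hkey (by positivity)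
      _ = (α / α') * ‖z‖ := by ring
  have hsq : ‖β • a + (1 - β) • b‖ ^ 2 ≤ β * ‖a‖ ^ 2 + (1 - β) * ‖b‖ ^ 2 := by
    have hexp : ‖β • a + (1 - β) • b‖ ^ 2 =
        β ^ 2 * ‖a‖ ^ 2 + 2 * (β * (1 - β)) * ⟪a, b⟫_ℝ + (1 - β) ^ 2 * ‖b‖ ^ 2 := by
      rw [← real_inner_self_eq_norm_sq, ← real_inner_self_eq_norm_sq,
        ← real_inner_self_eq_norm_sq]
      simp only [inner_add_add_self, real_inner_smul_left, real_inner_smul_right]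
      rw [real_inner_comm b a]
      ring
    have hab : ⟪a, b⟫_ℝ ≤ ‖a‖ * ‖b‖ := real_inner_le_norm a b
    nlinarith [mul_nonneg (mul_nonneg hβ0.le (by linarith : (0:ℝ) ≤ 1 - β))
        (sq_nonneg (‖a‖ - ‖b‖)),
      mul_nonneg (mul_nonneg hβ0.le (by linarith : (0:ℝ) ≤ 1 - β)) (sub_nonneg.2 hab)]
  rw [hbs]
  have ha2 : ‖a‖ ^ 2 ≤ L ^ 2 := by nlinarith [norm_nonneg a]
  have hb2 : ‖b‖ ^ 2 ≤ ((α / α') * ‖z‖) ^ 2 := by nlinarith [norm_nonneg b]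
  nlinarith [mul_le_mul_of_nonneg_left ha2 hβ0.le,
    mul_le_mul_of_nonneg_left hb2 (by linarith : (0:ℝ) ≤ 1 - β)]
end

section
/- Let β ∈ (0,1], L ≥ 0, T ≥ 1, let (α_t)_{t≥1} be positive reals, let (g_t)_{t≥1} be vectors in ℝ^p with ‖g_t‖ ≤ L for all t, and let (z_t)_{t≥1} be vectors in ℝ^p satisfying ‖z_{t+1}‖² ≤ β‖g_t‖² + (1−β)(α_t/α_{t+1})² ‖z_t‖² for all t with 1 ≤ t ≤ T. Then ∑_{t=1}^{T} β α_t² ‖z_t‖² ≤ α_1² ‖z_1‖² + β L² ∑_{t=1}^{T} α_{t+1}². -/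
/-- If `‖z_{t+1}‖² ≤ β‖g_t‖² + (1−β)(α_t/α_{t+1})²‖z_t‖²` for `1 ≤ t ≤ T`,
with `‖g_t‖ ≤ L` and positive step sizes, then
`∑_{t=1}^T β α_t² ‖z_t‖² ≤ α_1²‖z_1‖² + β L² ∑_{t=1}^T α_{t+1}²`. -/
theorem stmt5 (p : ℕ) (β : ℝ) (hβ : β ∈ Set.Ioc (0 : ℝ) 1) (L : ℝ) (hL : 0 ≤ L)
    (T : ℕ) (hT : 1 ≤ T) (α : ℕ → ℝ) (hα : ∀ t, 0 < α t)
    (g z : ℕ → EuclideanSpace ℝ (Fin p)) (hg : ∀ t, ‖g t‖ ≤ L)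
    (hrec : ∀ t, 1 ≤ t → t ≤ T →
      ‖z (t + 1)‖ ^ 2 ≤ β * ‖g t‖ ^ 2 + (1 - β) * (α t / α (t + 1)) ^ 2 * ‖z t‖ ^ 2) :
    ∑ t ∈ Finset.Icc 1 T, β * (α t) ^ 2 * ‖z t‖ ^ 2 ≤
      (α 1) ^ 2 * ‖z 1‖ ^ 2 + β * L ^ 2 * ∑ t ∈ Finset.Icc 1 T, (α (t + 1)) ^ 2 := by
  obtain ⟨hβ0, hβ1⟩ := hβ
  have step : ∀ t, 1 ≤ t → t ≤ T →
      α (t + 1) ^ 2 * ‖z (t + 1)‖ ^ 2 ≤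
        β * L ^ 2 * α (t + 1) ^ 2 + (1 - β) * α t ^ 2 * ‖z t‖ ^ 2 := by
    intro t h1 h2
    have h := hrec t h1 h2
    have hαt := hα t
    have hαt1 := hα (t + 1)
    have hgt := hg t
    have hgt0 : (0:ℝ) ≤ ‖g t‖ := norm_nonneg _
    have hgL : ‖g t‖ ^ 2 ≤ L ^ 2 := by nlinarith
    have hdiv : (α t / α (t + 1)) ^ 2 * α (t + 1) ^ 2 = α t ^ 2 := by
      field_simp
    calc α (t + 1) ^ 2 * ‖z (t + 1)‖ ^ 2
        ≤ α (t + 1) ^ 2 * (β * ‖g t‖ ^ 2 + (1 - β) * (α t / α (t + 1)) ^ 2 * ‖z t‖ ^ 2) := by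
          apply mul_le_mul_of_nonneg_left h (by positivity)
      _ = β * ‖g t‖ ^ 2 * α (t + 1) ^ 2 +
            (1 - β) * ((α t / α (t + 1)) ^ 2 * α (t + 1) ^ 2) * ‖z t‖ ^ 2 := by ring
      _ ≤ β * L ^ 2 * α (t + 1) ^ 2 + (1 - β) * α t ^ 2 * ‖z t‖ ^ 2 := by
          rw [hdiv]
          have : β * ‖g t‖ ^ 2 * α (t + 1) ^ 2 ≤ β * L ^ 2 * α (t + 1) ^ 2 := by
            apply mul_le_mul_of_nonneg_right _ (by positivity)
            exact mul_le_mul_of_nonneg_left hgL (le_of_lt hβ0)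
          linarith
  have key : ∀ N, 1 ≤ N → N ≤ T →
      ∑ t ∈ Finset.Icc 1 N, β * (α t) ^ 2 * ‖z t‖ ^ 2 + α (N + 1) ^ 2 * ‖z (N + 1)‖ ^ 2 ≤
        (α 1) ^ 2 * ‖z 1‖ ^ 2 + β * L ^ 2 * ∑ t ∈ Finset.Icc 1 N, (α (t + 1)) ^ 2 := by
    intro N hN1
    induction N with
    | zero => omega
    | succ n ih =>
      intro hNT
      rcases Nat.eq_zero_or_pos n with hn | hn
      · subst hn
        simp only [Finset.Icc_self, Finset.sum_singleton]
        have := step 1 le_rfl (by omega)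
        nlinarith [sq_nonneg (α 1), norm_nonneg (z 1), sq_nonneg ‖z 1‖]
      · have ihn := ih hn (by omega)
        rw [Finset.sum_Icc_succ_top (by omega : 1 ≤ n + 1),
            Finset.sum_Icc_succ_top (by omega : 1 ≤ n + 1)]
        have hs := step (n + 1) (by omega) hNT
        have hβz : β * α (n + 1) ^ 2 * ‖z (n + 1)‖ ^ 2 +
            (1 - β) * α (n + 1) ^ 2 * ‖z (n + 1)‖ ^ 2 = α (n + 1) ^ 2 * ‖z (n + 1)‖ ^ 2 := by
          ring
        nlinarith
  have := key T hT le_rfl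
  nlinarith [sq_nonneg (α (T + 1)), sq_nonneg ‖z (T + 1)‖, mul_nonneg (sq_nonneg (α (T + 1))) (sq_nonneg ‖z (T + 1)‖)]
end

section
/- Let Θ ⊆ ℝ^p be a nonempty closed convex set, let f : ℝ^p → ℝ, let ρ̂ > 0, and define the Moreau envelope φ_{1/ρ̂}(x) = inf_{y∈Θ} ( f(y) + (ρ̂/2)‖y − x‖² ). Let θ ∈ ℝ^p and suppose θ̂ ∈ Θ attains the infimum defining φ_{1/ρ̂}(θ), i.e., φ_{1/ρ̂}(θ) = f(θ̂) + (ρ̂/2)‖θ̂ − θ‖². Let g ∈ ℝ^p with ‖g‖ ≤ L, let α ≥ 0, and let θ⁺ = proj_Θ(θ − α g). Then φ_{1/ρ̂}(θ⁺) ≤ φ_{1/ρ̂}(θ) + ρ̂ α ⟨θ̂ − θ, g⟩ + (α² ρ̂ L²)/2. -/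
open scoped InnerProductSpace

/-- For the Moreau envelope `φ(x) = inf_{y∈Θ}(f y + (ρ̂/2)‖y − x‖²)` (valued in
`EReal` so that the infimum is always defined), if `θ̂ ∈ Θ` attains the infimum defining `φ(θ)`,
`‖g‖ ≤ L`, `α ≥ 0` and `θ⁺ = proj_Θ(θ − α g)`, then
`φ(θ⁺) ≤ φ(θ) + ρ̂ α ⟨θ̂ − θ, g⟩ + α²ρ̂L²/2`. -/
theorem stmt7 (p : ℕ) (Θ : Set (EuclideanSpace ℝ (Fin p))) (hne : Θ.Nonempty)
    (hcl : IsClosed Θ) (hconv : Convex ℝ Θ)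
    (f : EuclideanSpace ℝ (Fin p) → ℝ) (ρh : ℝ) (hρh : 0 < ρh)
    (φ : EuclideanSpace ℝ (Fin p) → EReal)
    (hφ : ∀ x, φ x = ⨅ y ∈ Θ, ((f y + (ρh / 2) * ‖y - x‖ ^ 2 : ℝ) : EReal))
    (θ θhat : EuclideanSpace ℝ (Fin p)) (hθhat : θhat ∈ Θ)
    (hatt : φ θ = ((f θhat + (ρh / 2) * ‖θhat - θ‖ ^ 2 : ℝ) : EReal))
    (g : EuclideanSpace ℝ (Fin p)) (L : ℝ) (hg : ‖g‖ ≤ L) (α : ℝ) (hα : 0 ≤ α)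
    (θp : EuclideanSpace ℝ (Fin p)) (hθp : θp ∈ Θ)
    (hproj : ∀ y ∈ Θ, dist (θ - α • g) θp ≤ dist (θ - α • g) y) :
    φ θp ≤ φ θ + ((ρh * α * ⟪θhat - θ, g⟫_ℝ + α ^ 2 * ρh * L ^ 2 / 2 : ℝ) : EReal) := by
  set u := θ - α • g with hu
  -- projection characterization
  have hinf : ‖u - θp‖ = ⨅ w : Θ, ‖u - w‖ := by
    haveI : Nonempty Θ := ⟨⟨θp, hθp⟩⟩
    apply le_antisymm
    · exact le_ciInf fun w => by simpa [dist_eq_norm] using hproj w w.2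
    · exact ciInf_le ⟨0, fun _ ⟨w, h⟩ => h ▸ norm_nonneg _⟩ (⟨θp, hθp⟩ : Θ)
  have hchar := (norm_eq_iInf_iff_real_inner_le_zero hconv hθp).mp hinf θhat hθhat
  -- key norm bound
  have hnorm : ‖θhat - θp‖ ^ 2 ≤ ‖θhat - u‖ ^ 2 := by
    have expand : ‖θhat - u‖ ^ 2 =
        ‖θhat - θp‖ ^ 2 - 2 * ⟪u - θp, θhat - θp⟫_ℝ + ‖u - θp‖ ^ 2 := by
      have h1 : θhat - u = (θhat - θp) - (u - θp) := by abel
      rw [h1, @norm_sub_sq_real, real_inner_comm]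
    calc ‖θhat - θp‖ ^ 2 ≤ ‖θhat - θp‖ ^ 2 - 2 * ⟪u - θp, θhat - θp⟫_ℝ + ‖u - θp‖ ^ 2 := by
          nlinarith [sq_nonneg ‖u - θp‖]
      _ = ‖θhat - u‖ ^ 2 := expand.symm
  have hL0 : 0 ≤ L := le_trans (norm_nonneg g) hg
  have hexp : ‖θhat - u‖ ^ 2 = ‖θhat - θ‖ ^ 2 + 2 * α * ⟪θhat - θ, g⟫_ℝ + α ^ 2 * ‖g‖ ^ 2 := by
    have h1 : θhat - u = (θhat - θ) + α • g := by rw [hu]; abel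
    rw [h1, @norm_add_sq_real, real_inner_smul_right, norm_smul, Real.norm_eq_abs,
      abs_of_nonneg hα, mul_pow]
    ring
  -- real inequality
  have hreal : f θhat + (ρh / 2) * ‖θhat - θp‖ ^ 2 ≤
      f θhat + (ρh / 2) * ‖θhat - θ‖ ^ 2 +
        (ρh * α * ⟪θhat - θ, g⟫_ℝ + α ^ 2 * ρh * L ^ 2 / 2) := by
    have hg2 : α ^ 2 * ‖g‖ ^ 2 ≤ α ^ 2 * L ^ 2 := by
      have := pow_le_pow_left₀ (norm_nonneg g) hg 2
      nlinarith [sq_nonneg α]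
    nlinarith [hnorm, hexp]
  -- conclude in EReal
  calc φ θp ≤ ((f θhat + (ρh / 2) * ‖θhat - θp‖ ^ 2 : ℝ) : EReal) := by
        rw [hφ θp]
        exact iInf₂_le θhat hθhat
    _ ≤ ((f θhat + (ρh / 2) * ‖θhat - θ‖ ^ 2 +
          (ρh * α * ⟪θhat - θ, g⟫_ℝ + α ^ 2 * ρh * L ^ 2 / 2) : ℝ) : EReal) := by
        exact_mod_cast hreal
    _ = φ θ + ((ρh * α * ⟪θhat - θ, g⟫_ℝ + α ^ 2 * ρh * L ^ 2 / 2 : ℝ) : EReal) := by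
        rw [hatt, ← EReal.coe_add]
end

section
/- Let Θ ⊆ ℝ^p be a convex set, let f : ℝ^p → ℝ be ρ-weakly convex, and let ρ̂ > ρ > 0. Let θ₁, θ₂ ∈ ℝ^p and suppose θ̂₁, θ̂₂ ∈ Θ are minimizers over Θ of θ' ↦ f(θ') + (ρ̂/2)‖θ' − θ₁‖² and θ' ↦ f(θ') + (ρ̂/2)‖θ' − θ₂‖², respectively. Then ‖(θ₁ − θ̂₁) − (θ₂ − θ̂₂)‖ ≤ ((2ρ̂ − ρ)/(ρ̂ − ρ)) ‖θ₁ − θ₂‖. -/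
set_option maxHeartbeats 1000000


lemma expand_sq {E : Type*} [NormedAddCommGroup E] [InnerProductSpace ℝ E] (a c w : E) (t : ℝ) :
    ‖(a + t • w) - c‖^2 = ‖a - c‖^2 + 2*t*(inner ℝ (a-c) w : ℝ) + t^2*‖w‖^2 := by
  have h : (a + t•w) - c = (a - c) + t•w := add_sub_right_comm a (t•w) c
  rw [h, norm_add_sq_real, real_inner_smul_right, norm_smul]
  rw [Real.norm_eq_abs, mul_pow, sq_abs]
  ring

/-- If `f` is `ρ`-weakly convex, `ρ̂ > ρ > 0`, and `θ̂₁, θ̂₂ ∈ Θ` (convex)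
are proximal points of `θ₁, θ₂` with parameter `ρ̂`, then
`‖(θ₁ − θ̂₁) − (θ₂ − θ̂₂)‖ ≤ ((2ρ̂ − ρ)/(ρ̂ − ρ))‖θ₁ − θ₂‖`. -/
theorem stmt9 (p : ℕ) (Θ : Set (EuclideanSpace ℝ (Fin p))) (hΘ : Convex ℝ Θ)
    (f : EuclideanSpace ℝ (Fin p) → ℝ) (ρ ρh : ℝ) (hρ : 0 < ρ) (hρh : ρ < ρh)
    (hwc : ConvexOn ℝ Set.univ (fun x => f x + (ρ / 2) * ‖x‖ ^ 2))
    (θ₁ θ₂ : EuclideanSpace ℝ (Fin p))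
    (θhat₁ θhat₂ : EuclideanSpace ℝ (Fin p)) (hmem₁ : θhat₁ ∈ Θ) (hmem₂ : θhat₂ ∈ Θ)
    (hmin₁ : ∀ θ' ∈ Θ,
      f θhat₁ + (ρh / 2) * ‖θhat₁ - θ₁‖ ^ 2 ≤ f θ' + (ρh / 2) * ‖θ' - θ₁‖ ^ 2)
    (hmin₂ : ∀ θ' ∈ Θ,
      f θhat₂ + (ρh / 2) * ‖θhat₂ - θ₂‖ ^ 2 ≤ f θ' + (ρh / 2) * ‖θ' - θ₂‖ ^ 2) :
    ‖(θ₁ - θhat₁) - (θ₂ - θhat₂)‖ ≤ ((2 * ρh - ρ) / (ρh - ρ)) * ‖θ₁ - θ₂‖ := by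
  have hμ : (0:ℝ) < ρh - ρ := by linarith
  set I : ℝ := inner ℝ (θ₁ - θ₂) (θhat₁ - θhat₂) with hI
  set N : ℝ := ‖θhat₁ - θhat₂‖^2 with hN
  have hN0 : 0 ≤ N := by rw [hN]; positivity
  have hnn : ‖θhat₂ - θhat₁‖^2 = N := by rw [hN, norm_sub_rev]
  have key : ∀ t : ℝ, 0 < t → t < 1 → (ρh - ρ) * N ≤ ρh * I + t * (ρh - ρ) * N := by
    intro t ht0 ht1
    have ha : (0:ℝ) ≤ 1 - t := by linarith
    have hx1eq : (1-t)•θhat₁ + t•θhat₂ = θhat₁ + t•(θhat₂ - θhat₁) := by module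
    have hx2eq : (1-t)•θhat₂ + t•θhat₁ = θhat₂ + t•(θhat₁ - θhat₂) := by module
    have hx1mem : θhat₁ + t•(θhat₂ - θhat₁) ∈ Θ := hx1eq ▸ hΘ hmem₁ hmem₂ ha ht0.le (by ring)
    have hx2mem : θhat₂ + t•(θhat₁ - θhat₂) ∈ Θ := hx2eq ▸ hΘ hmem₂ hmem₁ ha ht0.le (by ring)
    have h1 := hmin₁ _ hx1mem
    have h2 := hmin₂ _ hx2mem
    have h3 := hwc.2 (Set.mem_univ θhat₁) (Set.mem_univ θhat₂) ha ht0.le (by ring)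
    have h4 := hwc.2 (Set.mem_univ θhat₂) (Set.mem_univ θhat₁) ha ht0.le (by ring)
    rw [hx1eq] at h3
    rw [hx2eq] at h4
    simp only [smul_eq_mul] at h3 h4
    have e1 := expand_sq θhat₁ θ₁ (θhat₂ - θhat₁) t
    have e2 := expand_sq θhat₂ θ₂ (θhat₁ - θhat₂) t
    have e3 : ‖θhat₁ + t•(θhat₂ - θhat₁)‖^2
        = ‖θhat₁‖^2 + 2*t*(inner ℝ θhat₁ (θhat₂-θhat₁) : ℝ) + t^2*N := by
      have := expand_sq θhat₁ 0 (θhat₂ - θhat₁) t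
      simpa [hnn] using this
    have e4 : ‖θhat₂ + t•(θhat₁ - θhat₂)‖^2
        = ‖θhat₂‖^2 + 2*t*(inner ℝ θhat₂ (θhat₁-θhat₂) : ℝ) + t^2*N := by
      have := expand_sq θhat₂ 0 (θhat₁ - θhat₂) t
      simpa using this
    have q1 : N = ‖θhat₂‖^2 - ‖θhat₁‖^2 - 2*(inner ℝ θhat₁ (θhat₂-θhat₁) : ℝ) := by
      rw [← hnn, norm_sub_sq_real]
      simp only [inner_sub_right, real_inner_self_eq_norm_sq]
      have := real_inner_comm θhat₁ θhat₂
      linarith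
    have q2 : N = ‖θhat₁‖^2 - ‖θhat₂‖^2 - 2*(inner ℝ θhat₂ (θhat₁-θhat₂) : ℝ) := by
      rw [hN, norm_sub_sq_real]
      simp only [inner_sub_right, real_inner_self_eq_norm_sq]
      have := real_inner_comm θhat₂ θhat₁
      linarith
    have isum : (inner ℝ (θhat₁-θ₁) (θhat₂-θhat₁) : ℝ) + (inner ℝ (θhat₂-θ₂) (θhat₁-θhat₂) : ℝ)
        = I - N := by
      rw [hI, hN, norm_sub_sq_real]
      simp only [inner_sub_left, inner_sub_right, real_inner_self_eq_norm_sq]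
      have h := real_inner_comm θhat₁ θhat₂
      have h1 := real_inner_comm θ₁ θhat₁
      have h2 := real_inner_comm θ₁ θhat₂
      have h3 := real_inner_comm θ₂ θhat₁
      have h4 := real_inner_comm θ₂ θhat₂
      linarith
    have q1t : ρ/2*(t*N) = ρ/2*(t*‖θhat₂‖^2) - ρ/2*(t*‖θhat₁‖^2)
        - ρ*(t*(inner ℝ θhat₁ (θhat₂-θhat₁) : ℝ)) := by rw [q1]; ring
    have q2t : ρ/2*(t*N) = ρ/2*(t*‖θhat₁‖^2) - ρ/2*(t*‖θhat₂‖^2)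
        - ρ*(t*(inner ℝ θhat₂ (θhat₁-θhat₂) : ℝ)) := by rw [q2]; ring
    have isumt : ρh*(t*(inner ℝ (θhat₁-θ₁) (θhat₂-θhat₁) : ℝ))
        + ρh*(t*(inner ℝ (θhat₂-θ₂) (θhat₁-θhat₂) : ℝ)) = ρh*(t*I) - ρh*(t*N) := by
      have h := congrArg (fun z => ρh*(t*z)) isum
      linarith [h, mul_sub (ρh*t) I N]
    have hnnt : ρh/2*(t^2*‖θhat₂ - θhat₁‖^2) = ρh/2*(t^2*N) := by rw [hnn]
    have hnnt2 : ρh/2*(t^2*‖θhat₁ - θhat₂‖^2) = ρh/2*(t^2*N) := by rw [← hN]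
    -- summed inequality
    have hsum : 0 ≤ t * (ρ*(1-t)*N + ρh*(I - N) + ρh*t*N) := by
      rw [e1] at h1
      rw [e2] at h2
      rw [e3] at h3
      rw [e4] at h4
      linarith only [h1, h2, h3, h4, q1t, q2t, isumt, hnnt, hnnt2]
    have hX : 0 ≤ ρ*(1-t)*N + ρh*(I - N) + ρh*t*N := by
      have hd : 0 ≤ t * (ρ*(1-t)*N + ρh*(I - N) + ρh*t*N) / t := div_nonneg hsum ht0.le
      rwa [mul_div_cancel_left₀ _ (ne_of_gt ht0)] at hd
    linarith only [hX]
  have h0 : (ρh - ρ) * N ≤ ρh * I := by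
    by_contra hcon
    push_neg at hcon
    set ε : ℝ := ((ρh - ρ)*N - ρh*I)/2 with hε
    have hεpos : 0 < ε := by simp only [hε]; linarith
    have hden : (0:ℝ) < (ρh - ρ)*N + 1 := by nlinarith
    set t : ℝ := min (1/2) (ε / ((ρh - ρ)*N + 1)) with htdef
    have ht0 : 0 < t := lt_min (by norm_num) (div_pos hεpos hden)
    have ht1 : t < 1 := lt_of_le_of_lt (min_le_left _ _) (by norm_num)
    have hk := key t ht0 ht1
    have hsmall : t * ((ρh - ρ)*N) ≤ ε := by
      have h1 : t ≤ ε / ((ρh - ρ)*N + 1) := min_le_right _ _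
      have h2 : t * ((ρh - ρ)*N) ≤ (ε / ((ρh - ρ)*N + 1)) * ((ρh - ρ)*N) :=
        mul_le_mul_of_nonneg_right h1 (by positivity)
      have h3 : (ε / ((ρh - ρ)*N + 1)) * ((ρh - ρ)*N) ≤ ε := by
        rw [div_mul_eq_mul_div, div_le_iff₀ hden]
        nlinarith [hεpos]
      linarith
    linarith only [hk, hsmall, hcon, hε]
  have hCS : I ≤ ‖θ₁ - θ₂‖ * ‖θhat₁ - θhat₂‖ := real_inner_le_norm _ _
  have hv : ‖θhat₁ - θhat₂‖ ≤ (ρh/(ρh - ρ)) * ‖θ₁ - θ₂‖ := by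
    rcases eq_or_lt_of_le (norm_nonneg (θhat₁ - θhat₂)) with h|h
    · rw [← h]
      exact mul_nonneg (div_nonneg (by linarith) hμ.le) (norm_nonneg _)
    · have hρh0 : (0:ℝ) < ρh := lt_trans hρ hρh
      have hh : ρh * I ≤ ρh * (‖θ₁ - θ₂‖ * ‖θhat₁ - θhat₂‖) :=
        mul_le_mul_of_nonneg_left hCS hρh0.le
      have hq : (ρh - ρ) * ‖θhat₁ - θhat₂‖^2 ≤ ρh * (‖θ₁ - θ₂‖ * ‖θhat₁ - θhat₂‖) := by
        rw [← hN]; linarith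
      rw [div_mul_eq_mul_div, le_div_iff₀ hμ]
      refine (mul_le_mul_iff_of_pos_right h).mp ?_
      nlinarith only [hq]
  have heq : (θ₁ - θhat₁) - (θ₂ - θhat₂) = (θ₁ - θ₂) - (θhat₁ - θhat₂) := by abel
  rw [heq]
  have htri := norm_sub_le (θ₁ - θ₂) (θhat₁ - θhat₂)
  have hfrac : (2*ρh - ρ)/(ρh - ρ) = 1 + ρh/(ρh - ρ) := by field_simp; ring
  rw [hfrac]
  linarith only [htri, hv]
end

section
/- Let Θ ⊆ ℝ^p be a nonempty closed convex set, let β ∈ (0,1], α > 0, and let θ_prev, θ, θ̂ ∈ Θ and g ∈ ℝ^p. Define z = β g + ((1−β)/α)(θ_prev − θ), θ⁺ = proj_Θ(θ − α z), θ̄ = θ + ((1−β)/β)(θ − θ_prev), and θ̄⁺ = θ⁺ + ((1−β)/β)(θ⁺ − θ). Then ‖θ̄⁺ − θ̂‖ ≤ ‖θ̄ − θ̂ − α g‖. -/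
open RealInnerProductSpace


/-- With `z = β g + ((1−β)/α)(θ_prev − θ)`, `θ⁺ = proj_Θ(θ − α z)`,
`θ̄ = θ + ((1−β)/β)(θ − θ_prev)` and `θ̄⁺ = θ⁺ + ((1−β)/β)(θ⁺ − θ)`, one has
`‖θ̄⁺ − θ̂‖ ≤ ‖θ̄ − θ̂ − α g‖` for any `θ_prev, θ, θ̂ ∈ Θ` (nonempty closed convex). -/
theorem stmt10 (p : ℕ) (Θ : Set (EuclideanSpace ℝ (Fin p))) (hne : Θ.Nonempty)
    (hcl : IsClosed Θ) (hconv : Convex ℝ Θ)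
    (β : ℝ) (hβ : β ∈ Set.Ioc (0 : ℝ) 1) (α : ℝ) (hα : 0 < α)
    (θprev θ θhat : EuclideanSpace ℝ (Fin p))
    (hθprev : θprev ∈ Θ) (hθ : θ ∈ Θ) (hθhat : θhat ∈ Θ)
    (g z : EuclideanSpace ℝ (Fin p))
    (hz : z = β • g + ((1 - β) / α) • (θprev - θ))
    (θp : EuclideanSpace ℝ (Fin p)) (hθp : θp ∈ Θ)
    (hproj : ∀ y ∈ Θ, dist (θ - α • z) θp ≤ dist (θ - α • z) y)
    (θbar θbarp : EuclideanSpace ℝ (Fin p))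
    (hθbar : θbar = θ + ((1 - β) / β) • (θ - θprev))
    (hθbarp : θbarp = θp + ((1 - β) / β) • (θp - θ)) :
    ‖θbarp - θhat‖ ≤ ‖θbar - θhat - α • g‖ := by
  obtain ⟨hβ0, hβ1⟩ := hβ
  have hβ' : β ≠ 0 := hβ0.ne'
  set x := θ - α • z with hx
  set w := β • θhat + (1 - β) • θ with hw
  haveI : Nonempty Θ := ⟨⟨θp, hθp⟩⟩
  have hwΘ : w ∈ Θ := hconv hθhat hθ hβ0.le (by linarith) (by ring)
  -- variational inequality
  have hinf : ‖x - θp‖ = ⨅ y : Θ, ‖x - y‖ := by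
    refine le_antisymm (le_ciInf fun y => ?_) ?_
    · have := hproj y y.2
      simpa [dist_eq_norm] using this
    · refine ciInf_le ⟨0, ?_⟩ (⟨θp, hθp⟩ : Θ)
      rintro a ⟨y, rfl⟩
      exact norm_nonneg _
  have hvi : ∀ y ∈ Θ, (inner ℝ (x - θp) (y - θp) : ℝ) ≤ 0 :=
    (norm_eq_iInf_iff_real_inner_le_zero hconv hθp).mp hinf
  have hkey : ‖θp - w‖ ≤ ‖x - w‖ := by
    have h := hvi w hwΘ
    have hsq : ‖θp - w‖ ^ 2 ≤ ‖x - w‖ ^ 2 := by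
      have hexp : ‖x - w‖ ^ 2 =
          ‖x - θp‖ ^ 2 + ‖θp - w‖ ^ 2 - 2 * (inner ℝ (x - θp) (w - θp) : ℝ) := by
        have : x - w = (x - θp) - (w - θp) := by abel
        rw [this, @norm_sub_sq_real]
        have : θp - w = -(w - θp) := by abel
        rw [this, norm_neg]
        ring
      nlinarith [sq_nonneg ‖x - θp‖]
    exact (pow_le_pow_iff_left₀ (norm_nonneg _) (norm_nonneg _) two_ne_zero).mp hsq
  -- algebraic identities
  have e1 : θp - w = β • (θbarp - θhat) := by
    rw [hθbarp, hw]
    match_scalars <;> field_simp <;> ring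
  have e2 : x - w = β • (θbar - θhat - α • g) := by
    rw [hx, hθbar, hw, hz]
    match_scalars <;> field_simp <;> ring
  rw [e1, e2, norm_smul, norm_smul] at hkey
  exact le_of_mul_le_mul_left (by simpa [abs_of_pos hβ0] using hkey) hβ0
end

section
/- Let Θ ⊆ ℝ^p be a convex set, let f : ℝ^p → ℝ be ρ-weakly convex with ρ > 0, and let ρ̂ ≥ 2ρ. Let θ̄ ∈ ℝ^p, let θ ∈ Θ, and suppose θ̂ ∈ Θ is a minimizer over Θ of θ' ↦ f(θ') + (ρ̂/2)‖θ' − θ̄‖². Suppose v ∈ ℝ^p satisfies the weak-convexity subgradient inequality f(y) ≥ f(θ) + ⟨v, y − θ⟩ − (ρ/2)‖y − θ‖² for all y ∈ ℝ^p. Then ⟨θ − θ̂, v⟩ ≥ (ρ̂/2)‖θ̂ − θ̄‖² − (ρ̂/2)‖θ − θ̄‖². -/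
open scoped InnerProductSpace

lemma norm_combo_sq {E : Type*} [NormedAddCommGroup E] [InnerProductSpace ℝ E]
    (a b : E) (t : ℝ) :
    ‖t • a + (1 - t) • b‖ ^ 2 =
      t * ‖a‖ ^ 2 + (1 - t) * ‖b‖ ^ 2 - t * (1 - t) * ‖a - b‖ ^ 2 := by
  have h1 : ∀ x : E, ‖x‖ ^ 2 = ⟪x, x⟫_ℝ := fun x => (real_inner_self_eq_norm_sq x).symm
  simp only [h1, inner_add_left, inner_add_right, inner_sub_left, inner_sub_right,
    real_inner_smul_left, real_inner_smul_right]
  rw [real_inner_comm b a]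
  ring

/-- If `f` is `ρ`-weakly convex (`ρ > 0`), `ρ̂ ≥ 2ρ`, `θ ∈ Θ` (convex),
`θ̂ ∈ Θ` minimizes `θ' ↦ f θ' + (ρ̂/2)‖θ' − θ̄‖²` over `Θ`, and `v` is a weak-convexity
subgradient of `f` at `θ`, then `⟨θ − θ̂, v⟩ ≥ (ρ̂/2)‖θ̂ − θ̄‖² − (ρ̂/2)‖θ − θ̄‖²`. -/
theorem stmt11 (p : ℕ) (Θ : Set (EuclideanSpace ℝ (Fin p))) (hΘ : Convex ℝ Θ)
    (f : EuclideanSpace ℝ (Fin p) → ℝ) (ρ ρh : ℝ) (hρ : 0 < ρ) (hρh : 2 * ρ ≤ ρh)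
    (hwc : ConvexOn ℝ Set.univ (fun x => f x + (ρ / 2) * ‖x‖ ^ 2))
    (θbar : EuclideanSpace ℝ (Fin p)) (θ : EuclideanSpace ℝ (Fin p)) (hθ : θ ∈ Θ)
    (θhat : EuclideanSpace ℝ (Fin p)) (hmem : θhat ∈ Θ)
    (hmin : ∀ θ' ∈ Θ,
      f θhat + (ρh / 2) * ‖θhat - θbar‖ ^ 2 ≤ f θ' + (ρh / 2) * ‖θ' - θbar‖ ^ 2)
    (v : EuclideanSpace ℝ (Fin p))
    (hsub : ∀ y, f y ≥ f θ + ⟪v, y - θ⟫_ℝ - (ρ / 2) * ‖y - θ‖ ^ 2) :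
    ⟪θ - θhat, v⟫_ℝ ≥ (ρh / 2) * ‖θhat - θbar‖ ^ 2 - (ρh / 2) * ‖θ - θbar‖ ^ 2 := by
  set c2 := ‖θ - θhat‖ ^ 2 with hc2
  have hc2nn : 0 ≤ c2 := by positivity
  -- strong convexity step for each t ∈ (0,1]
  have key : ∀ t : ℝ, 0 < t → t ≤ 1 →
      f θhat + (ρh / 2) * ‖θhat - θbar‖ ^ 2 ≤
        f θ + (ρh / 2) * ‖θ - θbar‖ ^ 2 - ((ρh - ρ) / 2) * (1 - t) * c2 := by
    intro t ht0 ht1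
    have h1t : (0:ℝ) ≤ 1 - t := by linarith
    have hmemc : t • θ + (1 - t) • θhat ∈ Θ :=
      hΘ hθ hmem (le_of_lt ht0) h1t (by ring)
    have hF := hwc.2 (Set.mem_univ θ) (Set.mem_univ θhat) (le_of_lt ht0) h1t (by ring)
    simp only at hF
    have hn1 : ‖t • θ + (1 - t) • θhat‖ ^ 2
        = t * ‖θ‖ ^ 2 + (1 - t) * ‖θhat‖ ^ 2 - t * (1 - t) * c2 := norm_combo_sq θ θhat t
    have hshift : t • θ + (1 - t) • θhat - θbar
        = t • (θ - θbar) + (1 - t) • (θhat - θbar) := by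
      module
    have hn2 : ‖t • θ + (1 - t) • θhat - θbar‖ ^ 2
        = t * ‖θ - θbar‖ ^ 2 + (1 - t) * ‖θhat - θbar‖ ^ 2 - t * (1 - t) * c2 := by
      rw [hshift, norm_combo_sq, sub_sub_sub_cancel_right]
    have hminc := hmin _ hmemc
    simp only [smul_eq_mul] at hF
    rw [hn1] at hF
    rw [hn2] at hminc
    have hmul : t * (f θhat + (ρh / 2) * ‖θhat - θbar‖ ^ 2) ≤
        t * (f θ + (ρh / 2) * ‖θ - θbar‖ ^ 2 - ((ρh - ρ) / 2) * (1 - t) * c2) := by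
      nlinarith [hF, hminc, hn1, hn2]
    exact le_of_mul_le_mul_left hmul ht0
  have hμ : 0 < (ρh - ρ) / 2 := by linarith
  have hΔ : ((ρh - ρ) / 2) * c2 ≤
      (f θ + (ρh / 2) * ‖θ - θbar‖ ^ 2) - (f θhat + (ρh / 2) * ‖θhat - θbar‖ ^ 2) := by
    rcases eq_or_lt_of_le hc2nn with hc | hc
    · have := hmin θ hθ
      rw [← hc]
      linarith
    · apply le_of_forall_pos_le_add
      intro ε hε
      have hden : 0 < ((ρh - ρ) / 2) * c2 := by positivity
      set t := min 1 (ε / (((ρh - ρ) / 2) * c2)) with ht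
      have ht0 : 0 < t := lt_min one_pos (div_pos hε hden)
      have hk := key t ht0 (min_le_left _ _)
      have htle : t * (((ρh - ρ) / 2) * c2) ≤ ε := by
        calc t * (((ρh - ρ) / 2) * c2)
            ≤ (ε / (((ρh - ρ) / 2) * c2)) * (((ρh - ρ) / 2) * c2) :=
              mul_le_mul_of_nonneg_right (min_le_right _ _) (le_of_lt hden)
          _ = ε := div_mul_cancel₀ _ (ne_of_gt hden)
      nlinarith [hk, htle]
  have hs := hsub θhat
  have hv : ⟪v, θhat - θ⟫_ℝ = -⟪θ - θhat, v⟫_ℝ := by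
    rw [real_inner_comm, ← inner_neg_left, neg_sub]
  have hnorm : ‖θhat - θ‖ ^ 2 = c2 := by rw [hc2, norm_sub_rev]
  rw [hv, hnorm] at hs
  nlinarith [hΔ, hs, hc2nn]
end

section
/- Let Θ ⊆ ℝ^p be a convex set, let f : ℝ^p → ℝ be ρ-weakly convex and L-Lipschitz on Θ, and let ρ̂ > ρ > 0. Let G : ℝ^p → ℝ^p be L₁-Lipschitz on Θ with ‖G(θ)‖ ≤ L for all θ ∈ Θ. Let θ₁, θ₂ ∈ Θ and suppose θ̂₁, θ̂₂ ∈ Θ are minimizers over Θ of θ' ↦ f(θ') + (ρ̂/2)‖θ' − θ₁‖² and θ' ↦ f(θ') + (ρ̂/2)‖θ' − θ₂‖², respectively. Then |⟨θ̂₁ − θ₁, G(θ₁)⟩ − ⟨θ̂₂ − θ₂, G(θ₂)⟩| ≤ (2L(L₁ + ρ̂)/(ρ̂ − ρ)) ‖θ₁ − θ₂‖. -/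
open scoped InnerProductSpace

lemma norm_combo_sq_s13 {p : ℕ} (x y : EuclideanSpace ℝ (Fin p)) (t : ℝ) (ht0 : 0 ≤ t) (ht1 : t ≤ 1) :
    ‖(1 - t) • x + t • y‖ ^ 2
      = (1 - t) * ‖x‖ ^ 2 + t * ‖y‖ ^ 2 - t * (1 - t) * ‖y - x‖ ^ 2 := by
  have h1 := norm_add_sq_real ((1 - t) • x) (t • y)
  have h2 := norm_sub_sq_real y x
  rw [norm_smul, norm_smul, real_inner_smul_left, real_inner_smul_right,
    Real.norm_eq_abs, Real.norm_eq_abs, abs_of_nonneg ht0, abs_of_nonneg (by linarith : (0:ℝ) ≤ 1 - t)] at h1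
  linear_combination h1 + t*(1-t)*h2 - 2*t*(1-t)*(real_inner_comm x y)

/-- Strong convexity at a constrained minimizer. -/
lemma strong_min {p : ℕ} (Θ : Set (EuclideanSpace ℝ (Fin p))) (hΘ : Convex ℝ Θ)
    (φ : EuclideanSpace ℝ (Fin p) → ℝ) (hφ : ConvexOn ℝ Set.univ φ) (μ : ℝ) (hμ : 0 < μ)
    (x y : EuclideanSpace ℝ (Fin p)) (hx : x ∈ Θ) (hy : y ∈ Θ)
    (hmin : ∀ θ' ∈ Θ, φ x + μ / 2 * ‖x‖ ^ 2 ≤ φ θ' + μ / 2 * ‖θ'‖ ^ 2) :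
    φ x + μ / 2 * ‖x‖ ^ 2 + μ / 2 * ‖y - x‖ ^ 2 ≤ φ y + μ / 2 * ‖y‖ ^ 2 := by
  set R : ℝ := φ y + μ / 2 * ‖y‖ ^ 2 - (φ x + μ / 2 * ‖x‖ ^ 2) with hR
  have hc : ∀ t ∈ Set.Ioo (0:ℝ) 1, μ / 2 * (1 - t) * ‖y - x‖ ^ 2 ≤ R := by
    intro t ht
    obtain ⟨ht0, ht1⟩ := ht
    have hz : (1 - t) • x + t • y ∈ Θ := hΘ hx hy (by linarith) ht0.le (by ring)
    have h1 := hmin _ hz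
    have h2 := hφ.2 (Set.mem_univ x) (Set.mem_univ y) (by linarith : (0:ℝ) ≤ 1 - t) ht0.le (by ring)
    have h3 := norm_combo_sq_s13 x y t ht0.le ht1.le
    simp only [smul_eq_mul] at h2
    nlinarith [h1, h2, h3, mul_pos ht0 hμ]
  have htend : Filter.Tendsto (fun t : ℝ => μ / 2 * (1 - t) * ‖y - x‖ ^ 2)
      (nhdsWithin 0 (Set.Ioi 0)) (nhds (μ / 2 * (1 - 0) * ‖y - x‖ ^ 2)) := by
    apply Filter.Tendsto.mono_left _ nhdsWithin_le_nhds
    exact (Continuous.tendsto (by continuity) 0)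
  have hev : ∀ᶠ t in nhdsWithin (0:ℝ) (Set.Ioi 0),
      μ / 2 * (1 - t) * ‖y - x‖ ^ 2 ≤ R :=
    Filter.eventually_of_mem (Ioo_mem_nhdsGT_of_mem (by constructor <;> norm_num)) hc
  have := le_of_tendsto htend hev
  simp only [sub_zero, mul_one] at this
  linarith [this]

lemma affine_cvx {p : ℕ} (v : EuclideanSpace ℝ (Fin p)) (a c : ℝ) :
    ConvexOn ℝ Set.univ (fun θ : EuclideanSpace ℝ (Fin p) => a * ⟪θ, v⟫_ℝ + c) := by
  refine ⟨convex_univ, ?_⟩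
  intro x _ y _ s u hs hu hsu
  simp only [inner_add_left, real_inner_smul_left, smul_eq_mul]
  apply le_of_eq
  linear_combination (-c) * hsu


set_option maxHeartbeats 1000000 in
/-- If `f` is `ρ`-weakly convex and `L`-Lipschitz on the convex set `Θ`,
`ρ̂ > ρ > 0`, `G` is `L₁`-Lipschitz on `Θ` with `‖G θ‖ ≤ L` on `Θ`, and `θ̂₁, θ̂₂ ∈ Θ` are
proximal points of `θ₁, θ₂ ∈ Θ` with parameter `ρ̂`, then
`|⟨θ̂₁ − θ₁, G θ₁⟩ − ⟨θ̂₂ − θ₂, G θ₂⟩| ≤ (2L(L₁ + ρ̂)/(ρ̂ − ρ))‖θ₁ − θ₂‖`. -/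
theorem stmt13 (p : ℕ) (Θ : Set (EuclideanSpace ℝ (Fin p))) (hΘ : Convex ℝ Θ)
    (f : EuclideanSpace ℝ (Fin p) → ℝ) (ρ ρh L L₁ : ℝ) (hρ : 0 < ρ) (hρh : ρ < ρh)
    (hwc : ConvexOn ℝ Set.univ (fun x => f x + (ρ / 2) * ‖x‖ ^ 2))
    (hflip : ∀ x ∈ Θ, ∀ y ∈ Θ, |f x - f y| ≤ L * ‖x - y‖)
    (G : EuclideanSpace ℝ (Fin p) → EuclideanSpace ℝ (Fin p))
    (hGlip : ∀ x ∈ Θ, ∀ y ∈ Θ, ‖G x - G y‖ ≤ L₁ * ‖x - y‖)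
    (hGbdd : ∀ x ∈ Θ, ‖G x‖ ≤ L)
    (θ₁ θ₂ : EuclideanSpace ℝ (Fin p)) (hθ₁ : θ₁ ∈ Θ) (hθ₂ : θ₂ ∈ Θ)
    (θhat₁ θhat₂ : EuclideanSpace ℝ (Fin p)) (hmem₁ : θhat₁ ∈ Θ) (hmem₂ : θhat₂ ∈ Θ)
    (hmin₁ : ∀ θ' ∈ Θ,
      f θhat₁ + (ρh / 2) * ‖θhat₁ - θ₁‖ ^ 2 ≤ f θ' + (ρh / 2) * ‖θ' - θ₁‖ ^ 2)
    (hmin₂ : ∀ θ' ∈ Θ,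
      f θhat₂ + (ρh / 2) * ‖θhat₂ - θ₂‖ ^ 2 ≤ f θ' + (ρh / 2) * ‖θ' - θ₂‖ ^ 2) :
    |⟪θhat₁ - θ₁, G θ₁⟫_ℝ - ⟪θhat₂ - θ₂, G θ₂⟫_ℝ| ≤
      (2 * L * (L₁ + ρh) / (ρh - ρ)) * ‖θ₁ - θ₂‖ := by
  set μ : ℝ := ρh - ρ with hμdef
  have hμ : 0 < μ := by simp [hμdef]; linarith
  have hρh0 : 0 < ρh := lt_trans hρ hρh
  set t : ℝ := ‖θ₁ - θ₂‖ with htdef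
  have ht0 : 0 ≤ t := norm_nonneg _
  -- convexity of the shifted objectives
  have hcvx : ∀ v : EuclideanSpace ℝ (Fin p),
      ConvexOn ℝ Set.univ (fun θ => f θ + (ρh / 2) * ‖θ - v‖ ^ 2 - μ / 2 * ‖θ‖ ^ 2) := by
    intro v
    have heq : (fun θ : EuclideanSpace ℝ (Fin p) =>
        f θ + (ρh / 2) * ‖θ - v‖ ^ 2 - μ / 2 * ‖θ‖ ^ 2)
        = fun θ => (f θ + (ρ / 2) * ‖θ‖ ^ 2) + ((-ρh) * ⟪θ, v⟫_ℝ + ρh / 2 * ‖v‖ ^ 2) := by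
      funext θ
      have := norm_sub_sq_real θ v
      simp only [hμdef]
      linear_combination (ρh/2) * this
    rw [heq]
    exact hwc.add (affine_cvx v (-ρh) (ρh / 2 * ‖v‖ ^ 2))
  -- strong-convexity lower bounds at the two minimizers
  have hS1 := strong_min Θ hΘ (fun θ => f θ + (ρh / 2) * ‖θ - θ₁‖ ^ 2 - μ / 2 * ‖θ‖ ^ 2)
      (hcvx θ₁) μ hμ θhat₁ θhat₂ hmem₁ hmem₂
      (fun θ' hθ' => by have := hmin₁ θ' hθ'; linarith)
  have hS2 := strong_min Θ hΘ (fun θ => f θ + (ρh / 2) * ‖θ - θ₂‖ ^ 2 - μ / 2 * ‖θ‖ ^ 2)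
      (hcvx θ₂) μ hμ θhat₂ θhat₁ hmem₂ hmem₁
      (fun θ' hθ' => by have := hmin₂ θ' hθ'; linarith)
  set d : ℝ := ‖θhat₁ - θhat₂‖ with hddef
  have hd0 : 0 ≤ d := norm_nonneg _
  have hrev : ‖θhat₂ - θhat₁‖ = d := norm_sub_rev _ _
  rw [hrev] at hS1
  -- combine to get μ d² ≤ ρh ⟪θhat₁-θhat₂, θ₁-θ₂⟫
  have hIexp : ⟪θhat₁ - θhat₂, θ₁ - θ₂⟫_ℝ
      = ⟪θhat₁, θ₁⟫_ℝ - ⟪θhat₁, θ₂⟫_ℝ - ⟪θhat₂, θ₁⟫_ℝ + ⟪θhat₂, θ₂⟫_ℝ := by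
    simp only [inner_sub_left, inner_sub_right]; ring
  have e1 := norm_sub_sq_real θhat₁ θ₁
  have e2 := norm_sub_sq_real θhat₁ θ₂
  have e3 := norm_sub_sq_real θhat₂ θ₁
  have e4 := norm_sub_sq_real θhat₂ θ₂
  have hnorm : ‖θhat₂ - θ₁‖ ^ 2 + ‖θhat₁ - θ₂‖ ^ 2 - ‖θhat₁ - θ₁‖ ^ 2 - ‖θhat₂ - θ₂‖ ^ 2
      = 2 * ⟪θhat₁ - θhat₂, θ₁ - θ₂⟫_ℝ := by
    linear_combination e3 + e2 - e1 - e4 - 2 * hIexp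
  have hsum : μ * d ^ 2 ≤ ρh / 2 * (‖θhat₂ - θ₁‖ ^ 2 + ‖θhat₁ - θ₂‖ ^ 2
      - ‖θhat₁ - θ₁‖ ^ 2 - ‖θhat₂ - θ₂‖ ^ 2) := by linarith [hS1, hS2]
  have h6 : ρh / 2 * (‖θhat₂ - θ₁‖ ^ 2 + ‖θhat₁ - θ₂‖ ^ 2
      - ‖θhat₁ - θ₁‖ ^ 2 - ‖θhat₂ - θ₂‖ ^ 2) = ρh * ⟪θhat₁ - θhat₂, θ₁ - θ₂⟫_ℝ := by
    linear_combination (ρh / 2) * hnorm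
  have hkey : μ * d ^ 2 ≤ ρh * ⟪θhat₁ - θhat₂, θ₁ - θ₂⟫_ℝ := h6 ▸ hsum
  have hCS : ⟪θhat₁ - θhat₂, θ₁ - θ₂⟫_ℝ ≤ d * t := real_inner_le_norm _ _
  have hd : μ * d ≤ ρh * t := by
    rcases eq_or_lt_of_le hd0 with h | h
    · rw [← h]; simpa using mul_nonneg hρh0.le ht0
    · have h1 : μ * d ^ 2 ≤ ρh * (d * t) := le_trans hkey (by nlinarith [hCS])
      nlinarith [h1, h]
  -- bound ‖θhat₂ - θ₂‖
  set s : ℝ := ‖θhat₂ - θ₂‖ with hsdef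
  have hs0 : 0 ≤ s := norm_nonneg _
  have hL : 0 ≤ L := le_trans (norm_nonneg _) (hGbdd θ₁ hθ₁)
  have hs : ρh * s ≤ 2 * L := by
    have h1 := hmin₂ θ₂ hθ₂
    rw [sub_self, norm_zero] at h1
    have h2 := hflip θ₂ hθ₂ θhat₂ hmem₂
    rw [norm_sub_rev, ← hsdef] at h2
    have h3 : f θ₂ - f θhat₂ ≤ L * s := le_trans (le_abs_self _) h2
    rcases eq_or_lt_of_le hs0 with h | h
    · rw [← h]; simp; positivity
    · nlinarith [h1, h3, h]
  -- bound on G difference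
  have hK : ‖G θ₁ - G θ₂‖ ≤ L₁ * t := hGlip θ₁ hθ₁ θ₂ hθ₂
  have hK0 : 0 ≤ L₁ * t := le_trans (norm_nonneg _) hK
  -- decomposition
  have hA : ⟪θhat₁ - θ₁, G θ₁⟫_ℝ - ⟪θhat₂ - θ₂, G θ₂⟫_ℝ
      = ⟪(θhat₁ - θhat₂) - (θ₁ - θ₂), G θ₁⟫_ℝ + ⟪θhat₂ - θ₂, G θ₁ - G θ₂⟫_ℝ := by
    simp only [inner_sub_left, inner_sub_right]; ring
  have hAb : |⟪θhat₁ - θ₁, G θ₁⟫_ℝ - ⟪θhat₂ - θ₂, G θ₂⟫_ℝ| ≤ (d + t) * L + s * (L₁ * t) := by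
    rw [hA]
    refine le_trans (abs_add_le _ _) (add_le_add ?_ ?_)
    · refine le_trans (abs_real_inner_le_norm _ _) ?_
      have hn : ‖(θhat₁ - θhat₂) - (θ₁ - θ₂)‖ ≤ d + t := norm_sub_le _ _
      exact mul_le_mul hn (hGbdd θ₁ hθ₁) (norm_nonneg _) (by linarith)
    · refine le_trans (abs_real_inner_le_norm _ _) ?_
      exact mul_le_mul_of_nonneg_left hK hs0
  rw [div_mul_eq_mul_div, le_div_iff₀ hμ]
  have hstep := mul_le_mul_of_nonneg_right hAb hμ.le
  nlinarith [hstep, mul_le_mul_of_nonneg_left hd hL,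
    mul_le_mul_of_nonneg_right hs hK0,
    mul_le_mul_of_nonneg_left (show μ ≤ ρh by linarith [hμdef]) (mul_nonneg hL ht0),
    mul_le_mul_of_nonneg_left (show μ ≤ ρh by linarith [hμdef]) (mul_nonneg hs0 hK0)]
end

section
/- Let Θ ⊆ ℝ^p be a convex set, let f : ℝ^p → ℝ be ρ-weakly convex, and let ρ̂ > ρ > 0. Let θ₁, θ₂ ∈ ℝ^p and suppose θ̂₁, θ̂₂ ∈ Θ are minimizers over Θ of θ' ↦ f(θ') + (ρ̂/2)‖θ' − θ₁‖² and θ' ↦ f(θ') + (ρ̂/2)‖θ' − θ₂‖², respectively. Then ‖θ̂₁ − θ̂₂‖ ≤ (ρ̂/(ρ̂ − ρ)) ‖θ₁ − θ₂‖. -/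
open RealInnerProductSpace

lemma aux_quad {E : Type*} [NormedAddCommGroup E] [InnerProductSpace ℝ E]
    (a b c : E) (t : ℝ) :
    ‖((1-t)•a + t•b) - c‖^2
      = (1-t)*‖a-c‖^2 + t*‖b-c‖^2 - t*(1-t)*‖a-b‖^2 := by
  have h : ∀ x y : E, ‖x - y‖^2 = ⟪x,x⟫ - 2*⟪x,y⟫ + ⟪y,y⟫ := by
    intro x y
    rw [← real_inner_self_eq_norm_sq]
    simp only [inner_sub_left, inner_sub_right, real_inner_comm x y]; ring
  rw [h, h, h, h]
  simp only [inner_add_left, inner_add_right, real_inner_smul_left, real_inner_smul_right,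
    real_inner_comm a b]
  ring

lemma aux_limit {A M : ℝ} (hM0 : 0 ≤ M)
    (h : ∀ t ∈ Set.Ioo (0:ℝ) 1, (1-t)*M ≤ A) : M ≤ A := by
  have hAnn : 0 ≤ A := by
    have h12 := h (1/2) (by norm_num)
    linarith
  by_contra hcon
  push_neg at hcon
  have hMpos : 0 < M := lt_of_le_of_lt hAnn hcon
  set t := (1 - A/M)/2 with htd
  have hAM1 : A/M < 1 := (div_lt_one hMpos).2 hcon
  have hAMnn : 0 ≤ A/M := div_nonneg hAnn hMpos.le
  have ht0 : 0 < t := by rw [htd]; linarith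
  have ht1 : t < 1 := by rw [htd]; linarith
  have hfin := h t ⟨ht0, ht1⟩
  have hdiv : A / M * M = A := div_mul_cancel₀ A hMpos.ne'
  have hexp : (1-t) * M = (1 * M + (A/M) * M)/2 := by rw [htd]; ring
  rw [hdiv, one_mul] at hexp
  rw [hexp] at hfin
  linarith

lemma aux_growth {E : Type*} [NormedAddCommGroup E] [InnerProductSpace ℝ E]
    (Θ : Set E) (hΘ : Convex ℝ Θ) (f : E → ℝ) (ρ ρh : ℝ) (hρ : 0 < ρ) (hρh : ρ < ρh)
    (hwc : ConvexOn ℝ Set.univ (fun x => f x + (ρ / 2) * ‖x‖ ^ 2))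
    (c : E) (θhat : E) (hmem : θhat ∈ Θ)
    (hmin : ∀ θ' ∈ Θ, f θhat + (ρh / 2) * ‖θhat - c‖ ^ 2 ≤ f θ' + (ρh / 2) * ‖θ' - c‖ ^ 2)
    (x : E) (hx : x ∈ Θ) :
    f θhat + (ρh / 2) * ‖θhat - c‖ ^ 2 + ((ρh - ρ)/2) * ‖x - θhat‖^2
      ≤ f x + (ρh / 2) * ‖x - c‖ ^ 2 := by
  have key : ∀ t ∈ Set.Ioo (0:ℝ) 1,
      f θhat + (ρh / 2) * ‖θhat - c‖ ^ 2 + ((ρh-ρ)/2) * ((1-t) * ‖θhat - x‖^2)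
        ≤ f x + (ρh / 2) * ‖x - c‖ ^ 2 := by
    intro t ht
    obtain ⟨ht0, ht1⟩ := ht
    set y := (1-t) • θhat + t • x with hy
    have hyΘ : y ∈ Θ := hΘ hmem hx (by linarith) (le_of_lt ht0) (by ring)
    have hcv := hwc.2 (Set.mem_univ θhat) (Set.mem_univ x)
      (show (0:ℝ) ≤ 1-t by linarith) (le_of_lt ht0) (by ring)
    simp only [smul_eq_mul, ← hy] at hcv
    have hn : ‖y‖^2 = (1-t)*‖θhat‖^2 + t*‖x‖^2 - t*(1-t)*‖θhat-x‖^2 := by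
      have := aux_quad θhat x (0 : E) t
      simpa [← hy] using this
    have hn2 : ‖y - c‖^2 = (1-t)*‖θhat-c‖^2 + t*‖x-c‖^2 - t*(1-t)*‖θhat-x‖^2 := by
      have := aux_quad θhat x c t
      rw [← hy] at this
      exact this
    rw [hn] at hcv
    have hmy := hmin y hyΘ
    rw [hn2] at hmy
    -- from hmy and hcv, deduce: t * (goal stuff)
    have hstep : t * (f θhat + (ρh / 2) * ‖θhat - c‖ ^ 2 + ((ρh-ρ)/2) * ((1-t) * ‖θhat - x‖^2))
        ≤ t * (f x + (ρh / 2) * ‖x - c‖ ^ 2) := by nlinarith [hmy, hcv]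
    have := mul_le_mul_iff_right₀ ht0 |>.mp hstep
    linarith [this]
  have hns : ‖x - θhat‖ = ‖θhat - x‖ := norm_sub_rev _ _
  rw [hns]
  have hM0 : 0 ≤ ((ρh-ρ)/2) * ‖θhat - x‖^2 :=
    mul_nonneg (by linarith) (sq_nonneg _)
  have := aux_limit (A := f x + (ρh / 2) * ‖x - c‖ ^ 2
      - (f θhat + (ρh / 2) * ‖θhat - c‖ ^ 2))
    (M := ((ρh-ρ)/2) * ‖θhat - x‖^2) hM0 (by
      intro t ht
      have := key t ht
      nlinarith [this])
  linarith

lemma aux_cross {E : Type*} [NormedAddCommGroup E] [InnerProductSpace ℝ E]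
    (a b c d : E) :
    ‖b-c‖^2 + ‖a-d‖^2 - ‖a-c‖^2 - ‖b-d‖^2 = 2*⟪a-b, c-d⟫ := by
  have h : ∀ x y : E, ‖x - y‖^2 = ⟪x,x⟫ - 2*⟪x,y⟫ + ⟪y,y⟫ := by
    intro x y
    rw [← real_inner_self_eq_norm_sq]
    simp only [inner_sub_left, inner_sub_right, real_inner_comm x y]; ring
  rw [h, h, h, h]
  simp only [inner_sub_left, inner_sub_right, real_inner_comm a c, real_inner_comm a d,
    real_inner_comm b c, real_inner_comm b d]
  ring

/-- If `f` is `ρ`-weakly convex, `ρ̂ > ρ > 0`, and `θ̂₁, θ̂₂ ∈ Θ` (convex) are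
proximal points of `θ₁, θ₂` with parameter `ρ̂`, then `‖θ̂₁ − θ̂₂‖ ≤ (ρ̂/(ρ̂ − ρ))‖θ₁ − θ₂‖`. -/
theorem stmt14 (p : ℕ) (Θ : Set (EuclideanSpace ℝ (Fin p))) (hΘ : Convex ℝ Θ)
    (f : EuclideanSpace ℝ (Fin p) → ℝ) (ρ ρh : ℝ) (hρ : 0 < ρ) (hρh : ρ < ρh)
    (hwc : ConvexOn ℝ Set.univ (fun x => f x + (ρ / 2) * ‖x‖ ^ 2))
    (θ₁ θ₂ : EuclideanSpace ℝ (Fin p))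
    (θhat₁ θhat₂ : EuclideanSpace ℝ (Fin p)) (hmem₁ : θhat₁ ∈ Θ) (hmem₂ : θhat₂ ∈ Θ)
    (hmin₁ : ∀ θ' ∈ Θ,
      f θhat₁ + (ρh / 2) * ‖θhat₁ - θ₁‖ ^ 2 ≤ f θ' + (ρh / 2) * ‖θ' - θ₁‖ ^ 2)
    (hmin₂ : ∀ θ' ∈ Θ,
      f θhat₂ + (ρh / 2) * ‖θhat₂ - θ₂‖ ^ 2 ≤ f θ' + (ρh / 2) * ‖θ' - θ₂‖ ^ 2) :
    ‖θhat₁ - θhat₂‖ ≤ (ρh / (ρh - ρ)) * ‖θ₁ - θ₂‖ := by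
  have h1 := aux_growth Θ hΘ f ρ ρh hρ hρh hwc θ₁ θhat₁ hmem₁ hmin₁ θhat₂ hmem₂
  have h2 := aux_growth Θ hΘ f ρ ρh hρ hρh hwc θ₂ θhat₂ hmem₂ hmin₂ θhat₁ hmem₁
  have hcross := aux_cross θhat₁ θhat₂ θ₁ θ₂
  have hrev : ‖θhat₂ - θhat₁‖ = ‖θhat₁ - θhat₂‖ := norm_sub_rev _ _
  rw [hrev] at h1
  have hsum : (ρh - ρ) * ‖θhat₁ - θhat₂‖^2 ≤ ρh * ⟪θhat₁ - θhat₂, θ₁ - θ₂⟫ := by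
    nlinarith [h1, h2, hcross]
  have hcs : ⟪θhat₁ - θhat₂, θ₁ - θ₂⟫ ≤ ‖θhat₁ - θhat₂‖ * ‖θ₁ - θ₂‖ :=
    real_inner_le_norm _ _
  have hμ : (0:ℝ) < ρh - ρ := by linarith
  rcases eq_or_lt_of_le (norm_nonneg (θhat₁ - θhat₂)) with hd | hd
  · rw [← hd]
    have : (0:ℝ) < ρh - ρ := by linarith
    exact mul_nonneg (div_nonneg (by linarith) this.le) (norm_nonneg _)
  · rw [div_mul_eq_mul_div, le_div_iff₀ hμ]
    nlinarith [hsum, hcs, hd, mul_nonneg (norm_nonneg (θhat₁ - θhat₂)) (norm_nonneg (θ₁ - θ₂))]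
end

section
/- Let a_1, …, a_n be nonnegative real numbers and let v_0 > 0. Then ∑_{i=1}^{n} a_i / (v_0 + ∑_{j=1}^{i} a_j) ≤ log( 1 + (∑_{i=1}^{n} a_i)/v_0 ). -/
lemma key16 (a s : ℝ) (ha : 0 ≤ a) (hs : 0 < s) :
    a / (s + a) ≤ Real.log (s + a) - Real.log s := by
  have hsa : 0 < s + a := by linarith
  have h := Real.log_le_sub_one_of_pos (show 0 < s / (s + a) by positivity)
  rw [Real.log_div (ne_of_gt hs) (ne_of_gt hsa)] at h
  have h2 : s / (s + a) - 1 = -(a / (s + a)) := by field_simp; ring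
  linarith

lemma main16 (a : ℕ → ℝ) (v0 : ℝ) (hv0 : 0 < v0) :
    ∀ n : ℕ, (∀ i, 1 ≤ i → i ≤ n → 0 ≤ a i) →
    ∑ i ∈ Finset.Icc 1 n, a i / (v0 + ∑ j ∈ Finset.Icc 1 i, a j) ≤
      Real.log (v0 + ∑ i ∈ Finset.Icc 1 n, a i) - Real.log v0 := by
  intro n
  induction n with
  | zero => simp
  | succ n ih =>
    intro ha
    have ha' : ∀ i, 1 ≤ i → i ≤ n → 0 ≤ a i := fun i h1 h2 => ha i h1 (h2.trans (Nat.le_succ n))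
    have hsum : 0 ≤ ∑ j ∈ Finset.Icc 1 n, a j :=
      Finset.sum_nonneg fun i hi => by
        rw [Finset.mem_Icc] at hi; exact ha' i hi.1 hi.2
    have hS : 0 < v0 + ∑ j ∈ Finset.Icc 1 n, a j := by linarith
    have han1 : 0 ≤ a (n + 1) := ha (n + 1) (Nat.le_add_left 1 n) le_rfl
    rw [Finset.sum_Icc_succ_top (Nat.one_le_iff_ne_zero.mpr (Nat.succ_ne_zero n)),
        Finset.sum_Icc_succ_top (Nat.one_le_iff_ne_zero.mpr (Nat.succ_ne_zero n))]
    have hkey := key16 (a (n + 1)) (v0 + ∑ j ∈ Finset.Icc 1 n, a j) han1 hS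
    have := ih ha'
    have harr : v0 + ∑ j ∈ Finset.Icc 1 n, a j + a (n + 1)
        = v0 + (∑ j ∈ Finset.Icc 1 n, a j + a (n + 1)) := by ring
    rw [harr] at hkey
    linarith

/-- For nonnegative `a_1, …, a_n` and `v₀ > 0`,
`∑_{i=1}^n a_i/(v₀ + ∑_{j=1}^i a_j) ≤ log(1 + (∑_{i=1}^n a_i)/v₀)`. -/
theorem stmt16 (n : ℕ) (a : ℕ → ℝ) (ha : ∀ i, 1 ≤ i → i ≤ n → 0 ≤ a i)
    (v0 : ℝ) (hv0 : 0 < v0) :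
    ∑ i ∈ Finset.Icc 1 n, a i / (v0 + ∑ j ∈ Finset.Icc 1 i, a j) ≤
      Real.log (1 + (∑ i ∈ Finset.Icc 1 n, a i) / v0) := by
  have h := main16 a v0 hv0 n ha
  have hsum : 0 ≤ ∑ j ∈ Finset.Icc 1 n, a j :=
    Finset.sum_nonneg fun i hi => by
      rw [Finset.mem_Icc] at hi; exact ha i hi.1 hi.2
  have heq : 1 + (∑ i ∈ Finset.Icc 1 n, a i) / v0
      = (v0 + ∑ i ∈ Finset.Icc 1 n, a i) / v0 := by field_simp
  rw [heq, Real.log_div (by positivity) (ne_of_gt hv0)]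
  exact h
end

section
/- Let a_1, …, a_n be nonnegative real numbers. Then ∑_{i=1}^{n} a_i / √(∑_{j=1}^{i} a_j) ≤ 2 √(∑_{i=1}^{n} a_i), where any term with zero denominator is interpreted as 0. -/
/-- For nonnegative `a_1, …, a_n`,
`∑_{i=1}^n a_i/√(∑_{j=1}^i a_j) ≤ 2√(∑_{i=1}^n a_i)` (terms with zero denominator are `0`,
which is Lean's convention for division by zero). -/
theorem stmt17 (n : ℕ) (a : ℕ → ℝ) (ha : ∀ i, 1 ≤ i → i ≤ n → 0 ≤ a i) :
    ∑ i ∈ Finset.Icc 1 n, a i / Real.sqrt (∑ j ∈ Finset.Icc 1 i, a j) ≤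
      2 * Real.sqrt (∑ i ∈ Finset.Icc 1 n, a i) := by
  induction n with
  | zero => simp
  | succ n ih =>
    have ha' : ∀ i, 1 ≤ i → i ≤ n → 0 ≤ a i :=
      fun i h1 h2 => ha i h1 (h2.trans (Nat.le_succ n))
    set S := ∑ j ∈ Finset.Icc 1 n, a j with hSdef
    set S' := ∑ j ∈ Finset.Icc 1 (n+1), a j with hS'def
    have haN : 0 ≤ a (n+1) := ha _ (by omega) le_rfl
    have hsum : S' = S + a (n+1) := by
      rw [hS'def, Finset.sum_Icc_succ_top (by omega : 1 ≤ n+1)]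
    have hSnn : 0 ≤ S :=
      Finset.sum_nonneg fun i hi => by
        obtain ⟨h1, h2⟩ := Finset.mem_Icc.mp hi; exact ha' i h1 h2
    have hS'nn : 0 ≤ S' := by rw [hsum]; positivity
    have hmono : ∀ i, 1 ≤ i → i ≤ n → Real.sqrt (∑ j ∈ Finset.Icc 1 i, a j) =
        Real.sqrt (∑ j ∈ Finset.Icc 1 i, a j) := fun _ _ _ => rfl
    rw [Finset.sum_Icc_succ_top (by omega : 1 ≤ n+1)]
    have key : a (n+1) / Real.sqrt S' ≤ 2 * Real.sqrt S' - 2 * Real.sqrt S := by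
      by_cases hz : S' = 0
      · have hS0 : S = 0 := by nlinarith [hsum]
        have haz : a (n+1) = 0 := by nlinarith [hsum]
        simp [hz, hS0, haz]
      · have hpos : 0 < S' := lt_of_le_of_ne hS'nn (Ne.symm hz)
        have hsq : 0 < Real.sqrt S' := Real.sqrt_pos.mpr hpos
        rw [div_le_iff₀ hsq]
        have h1 : Real.sqrt S' ^ 2 = S' := Real.sq_sqrt hS'nn
        have h2 : Real.sqrt S ^ 2 = S := Real.sq_sqrt hSnn
        nlinarith [sq_nonneg (Real.sqrt S' - Real.sqrt S), hsum]
    have := ih ha'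
    calc (∑ i ∈ Finset.Icc 1 n, a i / Real.sqrt (∑ j ∈ Finset.Icc 1 i, a j))
          + a (n+1) / Real.sqrt S'
        ≤ 2 * Real.sqrt S + (2 * Real.sqrt S' - 2 * Real.sqrt S) :=
          add_le_add (ih ha') key
      _ = 2 * Real.sqrt S' := by ring
end

section
/- Let T ≥ 1 and k ≥ 1 be integers, let a_1, …, a_T be nonnegative real numbers, and let v_0 > 0, α > 0. For 1 ≤ s ≤ T define c_s = α·a_s / √(v_0 + ∑_{j=1}^{s} a_j²), and set c_s = 0 for s ≤ 0. Then ∑_{t=1}^{T} (√t/(2k)) ( ∑_{s=t−k}^{t−1} c_s )² ≤ (√T · k · α² / 2) · log( 1 + v_0^{-1} ∑_{t=1}^{T} a_t² ). -/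
open Finset

private lemma stmt18_log (v0 : ℝ) (hv0 : 0 < v0) (a : ℕ → ℝ) :
    ∀ n, ∑ s ∈ Icc 1 n, (a s) ^ 2 / (v0 + ∑ j ∈ Icc 1 s, (a j) ^ 2) ≤
      Real.log (v0 + ∑ j ∈ Icc 1 n, (a j) ^ 2) - Real.log v0 := by
  intro n
  induction n with
  | zero => simp
  | succ n ih =>
    have hS : ∀ m, 0 < v0 + ∑ j ∈ Icc 1 m, (a j) ^ 2 := by
      intro m
      have : (0:ℝ) ≤ ∑ j ∈ Icc 1 m, (a j) ^ 2 := Finset.sum_nonneg fun j _ => sq_nonneg _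
      linarith
    rw [Finset.sum_Icc_succ_top (Nat.one_le_iff_ne_zero.mpr (Nat.succ_ne_zero n)),
        Finset.sum_Icc_succ_top (Nat.one_le_iff_ne_zero.mpr (Nat.succ_ne_zero n))]
    set Sn := v0 + ∑ j ∈ Icc 1 n, (a j) ^ 2 with hSn
    have hSn0 : 0 < Sn := hS n
    set x := (a (n+1)) ^ 2 with hx
    have hx0 : 0 ≤ x := sq_nonneg _
    have hy : v0 + (∑ j ∈ Icc 1 n, (a j) ^ 2 + x) = Sn + x := by rw [hSn]; ring
    rw [hy]
    have key : x / (Sn + x) ≤ Real.log (Sn + x) - Real.log Sn := by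
      have hpos : 0 < Sn / (Sn + x) := by positivity
      have h1 := Real.log_le_sub_one_of_pos hpos
      rw [Real.log_div (ne_of_gt hSn0) (by positivity)] at h1
      have h2 : Sn / (Sn + x) - 1 = -(x / (Sn + x)) := by
        field_simp
        ring
      linarith
    calc ∑ s ∈ Icc 1 n, (a s) ^ 2 / (v0 + ∑ j ∈ Icc 1 s, (a j) ^ 2) + x / (Sn + x)
        ≤ (Real.log Sn - Real.log v0) + (Real.log (Sn + x) - Real.log Sn) := by
          exact add_le_add ih key
      _ = Real.log (Sn + x) - Real.log v0 := by ring

/-- With `c_s = α a_s / √(v₀ + ∑_{j=1}^s a_j²)` for `s ≥ 1` and `c_s = 0`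
for `s ≤ 0` (here `c 0 = 0` and natural subtraction truncates the summation range at `0`),
`∑_{t=1}^T (√t/(2k)) (∑_{s=t−k}^{t−1} c_s)² ≤ (√T k α²/2) log(1 + v₀⁻¹ ∑_{t=1}^T a_t²)`. -/
theorem stmt18 (T k : ℕ) (hT : 1 ≤ T) (hk : 1 ≤ k)
    (a : ℕ → ℝ) (ha : ∀ t, 1 ≤ t → t ≤ T → 0 ≤ a t)
    (v0 α : ℝ) (hv0 : 0 < v0) (hα : 0 < α)
    (c : ℕ → ℝ) (hc0 : c 0 = 0)
    (hc : ∀ s, 1 ≤ s →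
      c s = α * a s / Real.sqrt (v0 + ∑ j ∈ Finset.Icc 1 s, (a j) ^ 2)) :
    ∑ t ∈ Finset.Icc 1 T, (Real.sqrt t / (2 * k)) * (∑ s ∈ Finset.Icc (t - k) (t - 1), c s) ^ 2 ≤
      (Real.sqrt T * k * α ^ 2 / 2) *
        Real.log (1 + v0⁻¹ * ∑ t ∈ Finset.Icc 1 T, (a t) ^ 2) := by
  have hS : ∀ m, 0 < v0 + ∑ j ∈ Icc 1 m, (a j) ^ 2 := by
    intro m
    have : (0:ℝ) ≤ ∑ j ∈ Icc 1 m, (a j) ^ 2 := Finset.sum_nonneg fun j _ => sq_nonneg _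
    linarith
  have hkR : (0:ℝ) < (k:ℝ) := by exact_mod_cast hk
  set L := Real.log (1 + v0⁻¹ * ∑ t ∈ Finset.Icc 1 T, (a t) ^ 2) with hL
  -- c s ^ 2 = α^2 * (a s ^ 2 / S s)
  have hcsq : ∀ s, 1 ≤ s → c s ^ 2 = α ^ 2 * ((a s) ^ 2 / (v0 + ∑ j ∈ Icc 1 s, (a j) ^ 2)) := by
    intro s hs
    rw [hc s hs, div_pow, mul_pow, Real.sq_sqrt (le_of_lt (hS s)), mul_div_assoc]
  -- sum of c^2 bound
  have hsum_csq : ∑ s ∈ Icc 1 T, c s ^ 2 ≤ α ^ 2 * L := by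
    have h1 : ∑ s ∈ Icc 1 T, c s ^ 2 =
        α ^ 2 * ∑ s ∈ Icc 1 T, (a s) ^ 2 / (v0 + ∑ j ∈ Icc 1 s, (a j) ^ 2) := by
      rw [Finset.mul_sum]
      exact Finset.sum_congr rfl fun s hs => hcsq s (Finset.mem_Icc.mp hs).1
    have h2 := stmt18_log v0 hv0 a T
    have h3 : Real.log (v0 + ∑ j ∈ Icc 1 T, (a j) ^ 2) - Real.log v0 = L := by
      rw [hL, ← Real.log_div (ne_of_gt (hS T)) (ne_of_gt hv0)]
      congr 1
      field_simp
    rw [h1, ← h3]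
    exact mul_le_mul_of_nonneg_left h2 (sq_nonneg α)
  have hcsq_nonneg : (0:ℝ) ≤ ∑ s ∈ Icc 1 T, c s ^ 2 :=
    Finset.sum_nonneg fun s _ => sq_nonneg _
  -- double sum bound
  have hswap : ∑ t ∈ Icc 1 T, ∑ s ∈ Icc (t - k) (t - 1), c s ^ 2 ≤
      (k:ℝ) * ∑ s ∈ Icc 1 T, c s ^ 2 := by
    have h1 : ∑ t ∈ Icc 1 T, ∑ s ∈ Icc (t - k) (t - 1), c s ^ 2 =
        ∑ t ∈ Icc 1 T, ∑ s ∈ Icc 0 T, (if s ∈ Icc (t - k) (t - 1) then c s ^ 2 else 0) := by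
      refine Finset.sum_congr rfl fun t ht => ?_
      rw [Finset.sum_ite_mem]
      congr 1
      refine (Finset.inter_eq_right.mpr fun s hs => ?_).symm
      simp only [Finset.mem_Icc] at *
      omega
    rw [h1, Finset.sum_comm]
    have h2 : ∀ s ∈ Icc 0 T,
        ∑ t ∈ Icc 1 T, (if s ∈ Icc (t - k) (t - 1) then c s ^ 2 else 0) ≤ (k:ℝ) * c s ^ 2 := by
      intro s _
      rw [Finset.sum_ite, Finset.sum_const, Finset.sum_const_zero, add_zero, nsmul_eq_mul]
      have hcard : ((Icc 1 T).filter (fun t => s ∈ Icc (t - k) (t - 1))).card ≤ k := by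
        have hsub : (Icc 1 T).filter (fun t => s ∈ Icc (t - k) (t - 1)) ⊆ Icc (s+1) (s+k) := by
          intro t ht
          simp only [Finset.mem_filter, Finset.mem_Icc] at *
          omega
        calc ((Icc 1 T).filter (fun t => s ∈ Icc (t - k) (t - 1))).card
            ≤ (Icc (s+1) (s+k)).card := Finset.card_le_card hsub
          _ = k := by rw [Nat.card_Icc]; omega
      exact mul_le_mul_of_nonneg_right (by exact_mod_cast hcard) (sq_nonneg _)
    calc ∑ s ∈ Icc 0 T, ∑ t ∈ Icc 1 T, (if s ∈ Icc (t - k) (t - 1) then c s ^ 2 else 0)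
        ≤ ∑ s ∈ Icc 0 T, (k:ℝ) * c s ^ 2 := Finset.sum_le_sum h2
      _ = (k:ℝ) * ∑ s ∈ Icc 0 T, c s ^ 2 := by rw [Finset.mul_sum]
      _ = (k:ℝ) * ∑ s ∈ Icc 1 T, c s ^ 2 := by
          congr 1
          have : Icc 0 T = insert 0 (Icc 1 T) := by
            ext x; simp only [Finset.mem_Icc, Finset.mem_insert]; omega
          rw [this, Finset.sum_insert (by simp), hc0]
          ring
  -- termwise bound
  have hterm : ∀ t ∈ Icc 1 T,
      (Real.sqrt t / (2 * k)) * (∑ s ∈ Icc (t - k) (t - 1), c s) ^ 2 ≤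
      (Real.sqrt T / (2 * k) * (k:ℝ)) * ∑ s ∈ Icc (t - k) (t - 1), c s ^ 2 := by
    intro t ht
    have ht' := Finset.mem_Icc.mp ht
    have h1 : Real.sqrt t / (2 * k) ≤ Real.sqrt T / (2 * k) := by
      apply div_le_div_of_nonneg_right _ (by positivity)
      exact Real.sqrt_le_sqrt (by exact_mod_cast ht'.2)
    have h2 : (∑ s ∈ Icc (t - k) (t - 1), c s) ^ 2 ≤
        (k:ℝ) * ∑ s ∈ Icc (t - k) (t - 1), c s ^ 2 := by
      have hcard : (Icc (t - k) (t - 1)).card ≤ k := by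
        rw [Nat.card_Icc]; omega
      have hcb := sq_sum_le_card_mul_sum_sq (s := Icc (t - k) (t - 1)) (f := c)
      have hnn : (0:ℝ) ≤ ∑ s ∈ Icc (t - k) (t - 1), c s ^ 2 :=
        Finset.sum_nonneg fun s _ => sq_nonneg _
      calc (∑ s ∈ Icc (t - k) (t - 1), c s) ^ 2
          ≤ ((Icc (t - k) (t - 1)).card : ℝ) * ∑ s ∈ Icc (t - k) (t - 1), c s ^ 2 := hcb
        _ ≤ (k:ℝ) * ∑ s ∈ Icc (t - k) (t - 1), c s ^ 2 :=
            mul_le_mul_of_nonneg_right (by exact_mod_cast hcard) hnn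
    calc (Real.sqrt t / (2 * k)) * (∑ s ∈ Icc (t - k) (t - 1), c s) ^ 2
        ≤ (Real.sqrt T / (2 * k)) * ((k:ℝ) * ∑ s ∈ Icc (t - k) (t - 1), c s ^ 2) := by
          apply mul_le_mul h1 h2 (sq_nonneg _) (by positivity)
      _ = (Real.sqrt T / (2 * k) * (k:ℝ)) * ∑ s ∈ Icc (t - k) (t - 1), c s ^ 2 := by ring
  -- combine
  have hC : (0:ℝ) ≤ Real.sqrt T / (2 * k) * (k:ℝ) := by positivity
  calc ∑ t ∈ Icc 1 T, (Real.sqrt t / (2 * k)) * (∑ s ∈ Icc (t - k) (t - 1), c s) ^ 2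
      ≤ ∑ t ∈ Icc 1 T, (Real.sqrt T / (2 * k) * (k:ℝ)) * ∑ s ∈ Icc (t - k) (t - 1), c s ^ 2 :=
        Finset.sum_le_sum hterm
    _ = (Real.sqrt T / (2 * k) * (k:ℝ)) * ∑ t ∈ Icc 1 T, ∑ s ∈ Icc (t - k) (t - 1), c s ^ 2 := by
        rw [Finset.mul_sum]
    _ ≤ (Real.sqrt T / (2 * k) * (k:ℝ)) * ((k:ℝ) * ∑ s ∈ Icc 1 T, c s ^ 2) :=
        mul_le_mul_of_nonneg_left hswap hC
    _ ≤ (Real.sqrt T / (2 * k) * (k:ℝ)) * ((k:ℝ) * (α ^ 2 * L)) := by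
        apply mul_le_mul_of_nonneg_left _ hC
        exact mul_le_mul_of_nonneg_left hsum_csq (le_of_lt hkR)
    _ = (Real.sqrt T * k * α ^ 2 / 2) * L := by
        field_simp
end

section
/- Let Θ ⊆ ℝ^p be a nonempty closed convex set and let f : ℝ^p → ℝ be differentiable with ρ-Lipschitz gradient, i.e., ‖∇f(x) − ∇f(y)‖ ≤ ρ‖x − y‖ for all x, y. Let θ ∈ Θ, let g ∈ ℝ^p, and define θ⁺ = proj_Θ(θ − g) and θ̃ = proj_Θ(θ − ∇f(θ)). Then the infimum over u ∈ N_Θ(θ⁺) of ‖∇f(θ⁺) + u‖ is at most (1 + ρ)‖θ − θ̃‖ + (2 + ρ)‖g − ∇f(θ)‖. -/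
set_option maxHeartbeats 1000000


open scoped InnerProductSpace

private lemma proj_var_ineq {F : Type*} [NormedAddCommGroup F] [InnerProductSpace ℝ F]
    {Θ : Set F} (hconv : Convex ℝ Θ)
    (x z : F) (hz : z ∈ Θ) (hmin : ∀ y ∈ Θ, dist x z ≤ dist x y) :
    ∀ y ∈ Θ, ⟪x - z, y - z⟫_ℝ ≤ 0 := by
  haveI : Nonempty Θ := ⟨⟨z, hz⟩⟩
  rw [← norm_eq_iInf_iff_real_inner_le_zero hconv hz]
  refine le_antisymm (le_ciInf fun w => ?_) (ciInf_le (⟨0, ?_⟩ : BddBelow (Set.range fun w : Θ => ‖x - (w : F)‖)) ⟨z, hz⟩)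
  · simpa [dist_eq_norm] using hmin w w.2
  · rintro r ⟨w, rfl⟩; exact norm_nonneg _

/-- For `f` differentiable with `ρ`-Lipschitz gradient, `θ ∈ Θ` (nonempty
closed convex), `θ⁺ = proj_Θ(θ − g)` and `θ̃ = proj_Θ(θ − ∇f(θ))`, the infimum over
`u ∈ N_Θ(θ⁺)` of `‖∇f(θ⁺) + u‖` is at most `(1 + ρ)‖θ − θ̃‖ + (2 + ρ)‖g − ∇f(θ)‖`. -/
theorem stmt19 (p : ℕ) (Θ : Set (EuclideanSpace ℝ (Fin p))) (hne : Θ.Nonempty)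
    (hcl : IsClosed Θ) (hconv : Convex ℝ Θ)
    (f : EuclideanSpace ℝ (Fin p) → ℝ) (hf : Differentiable ℝ f)
    (ρ : ℝ) (hlip : ∀ x y, ‖gradient f x - gradient f y‖ ≤ ρ * ‖x - y‖)
    (θ : EuclideanSpace ℝ (Fin p)) (hθ : θ ∈ Θ) (g : EuclideanSpace ℝ (Fin p))
    (θp : EuclideanSpace ℝ (Fin p)) (hθp : θp ∈ Θ)
    (hproj : ∀ y ∈ Θ, dist (θ - g) θp ≤ dist (θ - g) y)
    (θt : EuclideanSpace ℝ (Fin p)) (hθt : θt ∈ Θ)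
    (hproj2 : ∀ y ∈ Θ, dist (θ - gradient f θ) θt ≤ dist (θ - gradient f θ) y) :
    sInf {r : ℝ | ∃ u, (∀ y ∈ Θ, ⟪u, y - θp⟫_ℝ ≤ 0) ∧ r = ‖gradient f θp + u‖} ≤
      (1 + ρ) * ‖θ - θt‖ + (2 + ρ) * ‖g - gradient f θ‖ := by
  have hvar1 := proj_var_ineq hconv (θ - g) θp hθp hproj
  have hvar2 := proj_var_ineq hconv (θ - gradient f θ) θt hθt hproj2
  -- Nonexpansiveness: ‖θt - θp‖ ≤ ‖g - ∇f θ‖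
  have key : ‖θt - θp‖ ≤ ‖g - gradient f θ‖ := by
    have h1 := hvar1 θt hθt
    have h2 := hvar2 θp hθp
    have h2' : ⟪θt - (θ - gradient f θ), θt - θp⟫_ℝ ≤ 0 := by
      have e : θp - θt = -(θt - θp) := by abel
      rw [e, inner_neg_right] at h2
      have e2 : θt - (θ - gradient f θ) = -((θ - gradient f θ) - θt) := by abel
      rw [e2, inner_neg_left]
      linarith
    have hsum : ⟪((θ - g) - θp) + (θt - (θ - gradient f θ)), θt - θp⟫_ℝ ≤ 0 := by
      rw [inner_add_left]; linarith
    have e3 : ((θ - g) - θp) + (θt - (θ - gradient f θ)) =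
        (gradient f θ - g) + (θt - θp) := by abel
    rw [e3, inner_add_left, real_inner_self_eq_norm_sq] at hsum
    have hle : -⟪gradient f θ - g, θt - θp⟫_ℝ ≤ ‖gradient f θ - g‖ * ‖θt - θp‖ := by
      have h := real_inner_le_norm (g - gradient f θ) (θt - θp)
      have e : g - gradient f θ = -(gradient f θ - g) := by abel
      rw [e, inner_neg_left, norm_neg] at h
      exact h
    have e4 : ‖gradient f θ - g‖ = ‖g - gradient f θ‖ := norm_sub_rev _ _
    nlinarith [norm_nonneg (θt - θp), norm_nonneg (g - gradient f θ)]
  -- The chosen normal cone element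
  have hmem : ‖gradient f θp + ((θ - g) - θp)‖ ∈
      {r : ℝ | ∃ u, (∀ y ∈ Θ, ⟪u, y - θp⟫_ℝ ≤ 0) ∧ r = ‖gradient f θp + u‖} :=
    ⟨(θ - g) - θp, hvar1, rfl⟩
  have hbdd : BddBelow {r : ℝ | ∃ u, (∀ y ∈ Θ, ⟪u, y - θp⟫_ℝ ≤ 0) ∧
      r = ‖gradient f θp + u‖} := ⟨0, by rintro r ⟨u, _, rfl⟩; exact norm_nonneg _⟩
  refine le_trans (csInf_le hbdd hmem) ?_
  -- Bound the norm
  have edec : gradient f θp + ((θ - g) - θp) =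
      (gradient f θp - gradient f θ) + (gradient f θ - g) + (θ - θp) := by abel
  have hb : ‖gradient f θp + ((θ - g) - θp)‖ ≤
      ρ * ‖θp - θ‖ + ‖gradient f θ - g‖ + ‖θ - θp‖ := by
    rw [edec]
    refine le_trans (norm_add₃_le) ?_
    gcongr
    exact hlip θp θ
  have h5 : ‖θ - θp‖ ≤ ‖θ - θt‖ + ‖θt - θp‖ := norm_sub_le_norm_sub_add_norm_sub _ _ _
  have h6 : ‖θp - θ‖ = ‖θ - θp‖ := norm_sub_rev _ _
  have h7 : ‖gradient f θ - g‖ = ‖g - gradient f θ‖ := norm_sub_rev _ _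
  -- ρ is nonnegative unless the space is trivial
  rcases Nat.eq_zero_or_pos p with hp | hp
  · subst hp
    have hz : ∀ v : EuclideanSpace ℝ (Fin 0), v = 0 := fun v => Subsingleton.elim v 0
    have z1 : ‖θ - θt‖ = 0 := by rw [hz (θ - θt), norm_zero]
    have z2 : ‖g - gradient f θ‖ = 0 := by rw [hz (g - gradient f θ), norm_zero]
    have z3 : ‖gradient f θp + ((θ - g) - θp)‖ = 0 := by
      rw [hz (gradient f θp + ((θ - g) - θp)), norm_zero]
    rw [z1, z2, z3]; ring_nf; norm_num
  · have hρ : 0 ≤ ρ := by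
      have := hlip (EuclideanSpace.single (⟨0, hp⟩ : Fin p) (1 : ℝ)) 0
      have h1 : ‖(EuclideanSpace.single (⟨0, hp⟩ : Fin p) (1 : ℝ)) - 0‖ = 1 := by
        rw [sub_zero, EuclideanSpace.norm_single]; norm_num
      rw [h1, mul_one] at this
      exact le_trans (norm_nonneg _) this
    nlinarith [norm_nonneg (θ - θt), norm_nonneg (g - gradient f θ)]
end
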